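/- arXiv:math/0510470 — 2 statements merged into one kernel-verified Lean document; each statement's English description precedes it below -/
import Mathlib

section
/- Let P_1,…,P_n be polytopes in ℝ^d. For each 0 ≤ k ≤ d−1 and n ≥ 1, the number of k-dimensional faces of P_1 + ⋯ + P_n is bounded by f_k(P_1 + ⋯ + P_n) ≤ Σ ∏_{i=1}^n C(f_0(P_i), s_i), where the sum ranges over all integer tuples (s_1,…,s_n) with 1 ≤ s_i ≤ f_0(P_i) for each i and s_1 + ⋯ + s_n = k + n, and C denotes the binomial coefficient. -/
open Pointwise RealInnerProductSpace

noncomputable section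

abbrev E (d : ℕ) : Type := EuclideanSpace ℝ (Fin d)

def IsPolytope {d : ℕ} (P : Set (E d)) : Prop :=
  ∃ V : Finset (E d), V.Nonempty ∧ P = convexHull ℝ (V : Set (E d))

def maximizers {d : ℕ} (P : Set (E d)) (c : E d) : Set (E d) :=
  {x ∈ P | ∀ y ∈ P, ⟪y, c⟫ ≤ ⟪x, c⟫}

def IsFace {d : ℕ} (P F : Set (E d)) : Prop :=
  F = ∅ ∨ F = P ∨ ∃ c : E d, c ≠ 0 ∧ F = maximizers P c

def IsNontrivialFace {d : ℕ} (P F : Set (E d)) : Prop :=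
  IsFace P F ∧ F ≠ ∅ ∧ F ≠ P

def polarDual {d : ℕ} (P : Set (E d)) : Set (E d) :=
  {x | ∀ y ∈ P, ⟪x, y⟫ ≤ 1}

def dualFace {d : ℕ} (P F : Set (E d)) : Set (E d) :=
  {x ∈ polarDual P | ∀ f ∈ F, ⟪x, f⟫ = 1}

def normalCone {d : ℕ} (P F : Set (E d)) : Set (E d) :=
  {c | maximizers P c = F}

def IsPerfectlyCentered {d : ℕ} (P : Set (E d)) : Prop :=
  ∀ F : Set (E d), IsFace P F → F.Nonempty →
    (intrinsicInterior ℝ F ∩ normalCone P F).Nonempty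

def dimSet {d : ℕ} (F : Set (E d)) : ℕ :=
  Module.finrank ℝ (affineSpan ℝ F).direction

def fVec {d : ℕ} (P : Set (E d)) (k : ℕ) : ℕ :=
  {F : Set (E d) | IsFace P F ∧ F.Nonempty ∧ dimSet F = k}.ncard

local instance (d : ℕ) : DecidableEq (E d) := Classical.decEq _

variable {d : ℕ}

lemma maximizers_zero (P : Set (E d)) : maximizers P 0 = P := by
  simp [maximizers]

lemma maximizers_subset (P : Set (E d)) (c : E d) : maximizers P c ⊆ P := fun x hx => hx.1

lemma maximizers_convex {P : Set (E d)} (hP : Convex ℝ P) (c : E d) :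
    Convex ℝ (maximizers P c) := by
  intro x hx y hy a b ha hb hab
  refine ⟨hP hx.1 hy.1 ha hb hab, fun z hz => ?_⟩
  have h1 := hx.2 z hz
  have h2 := hy.2 z hz
  rw [inner_add_left, real_inner_smul_left, real_inner_smul_left]
  have hz' : (⟪z,c⟫:ℝ) = a*⟪z,c⟫ + b*⟪z,c⟫ := by rw [← add_mul, hab, one_mul]
  linarith [mul_le_mul_of_nonneg_left h1 ha, mul_le_mul_of_nonneg_left h2 hb]

lemma maximizers_singleton (a : E d) (c : E d) : maximizers ({a} : Set (E d)) c = {a} := by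
  ext x
  simp only [maximizers, Set.mem_setOf_eq, Set.mem_singleton_iff]
  exact ⟨fun h => h.1, fun h => ⟨h, by rintro y rfl; rw [h]⟩⟩

lemma maximizers_add (A B : Set (E d)) (c : E d) :
    maximizers (A + B) c = maximizers A c + maximizers B c := by
  ext x
  constructor
  · rintro ⟨⟨a, ha, b, hb, rfl⟩, hmax⟩
    refine ⟨a, ⟨ha, fun y hy => ?_⟩, b, ⟨hb, fun y hy => ?_⟩, rfl⟩
    · have := hmax (y + b) ⟨y, hy, b, hb, rfl⟩
      simpa [inner_add_left] using this
    · have := hmax (a + y) ⟨a, ha, y, hy, rfl⟩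
      simpa [inner_add_left] using this
  · rintro ⟨a, ha, b, hb, rfl⟩
    refine ⟨⟨a, ha.1, b, hb.1, rfl⟩, ?_⟩
    rintro y ⟨a', ha', b', hb', rfl⟩
    have := ha.2 a' ha'
    have := hb.2 b' hb'
    simp only [inner_add_left]
    linarith

lemma maximizers_sum {n : ℕ} (P : Fin n → Set (E d)) (c : E d) :
    maximizers (∑ i, P i) c = ∑ i, maximizers (P i) c := by
  classical
  induction (Finset.univ : Finset (Fin n)) using Finset.induction with
  | empty =>
      simp only [Finset.sum_empty]
      show maximizers ({0} : Set (E d)) c = ({0} : Set (E d))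
      exact maximizers_singleton 0 c
  | insert _ _ h ih =>
      rw [Finset.sum_insert h, Finset.sum_insert h, maximizers_add, ih]



lemma IsPolytope.compact {P : Set (E d)} (hP : IsPolytope P) : IsCompact P := by
  obtain ⟨V, -, rfl⟩ := hP
  exact V.finite_toSet.isCompact_convexHull ℝ

lemma IsPolytope.closed {P : Set (E d)} (hP : IsPolytope P) : IsClosed P := by
  obtain ⟨V, -, rfl⟩ := hP
  exact V.finite_toSet.isClosed_convexHull ℝ

lemma IsPolytope.convex {P : Set (E d)} (hP : IsPolytope P) : Convex ℝ P := by
  obtain ⟨V, -, rfl⟩ := hP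
  exact convex_convexHull ℝ _

lemma IsPolytope.nonempty {P : Set (E d)} (hP : IsPolytope P) : P.Nonempty := by
  obtain ⟨V, hV, rfl⟩ := hP
  exact hV.to_set.mono (subset_convexHull ℝ _)

lemma isClosed_maximizers {P : Set (E d)} (hP : IsClosed P) (c : E d) :
    IsClosed (maximizers P c) := by
  have : maximizers P c = P ∩ ⋂ y ∈ P, {x | ⟪y, c⟫ ≤ ⟪x, c⟫} := by
    ext x; simp [maximizers]
  rw [this]
  refine hP.inter (isClosed_biInter fun y _ => ?_)
  exact isClosed_le continuous_const ((continuous_id.inner continuous_const))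

lemma maximizers_nonempty {P : Set (E d)} (hPc : IsCompact P) (hne : P.Nonempty) (c : E d) :
    (maximizers P c).Nonempty := by
  have hcont : Continuous fun x : E d => (⟪x, c⟫ : ℝ) := continuous_id.inner continuous_const
  obtain ⟨x, hx, hmax⟩ := hPc.exists_isMaxOn hne hcont.continuousOn
  exact ⟨x, hx, fun y hy => hmax hy⟩

lemma isExposed_maximizers (P : Set (E d)) (c : E d) : IsExposed ℝ P (maximizers P c) := by
  intro _
  refine ⟨innerSL ℝ c, ?_⟩
  ext x
  simp only [maximizers, Set.mem_setOf_eq, innerSL_apply_apply]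
  constructor
  · rintro ⟨h1, h2⟩; exact ⟨h1, fun y hy => by rw [real_inner_comm y c, real_inner_comm x c]; exact h2 y hy⟩
  · rintro ⟨h1, h2⟩; exact ⟨h1, fun y hy => by rw [← real_inner_comm y c, ← real_inner_comm x c]; exact h2 y hy⟩

lemma IsFace.exists_maximizers {P F : Set (E d)} (hF : IsFace P F) (hne : F.Nonempty) :
    ∃ c : E d, F = maximizers P c := by
  rcases hF with rfl | rfl | ⟨c, -, rfl⟩
  · exact absurd hne (by simp)
  · exact ⟨0, (maximizers_zero _).symm⟩
  · exact ⟨c, rfl⟩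

lemma IsFace.isExtreme {P F : Set (E d)} (hF : IsFace P F) (hne : F.Nonempty) :
    IsExtreme ℝ P F := by
  obtain ⟨c, rfl⟩ := hF.exists_maximizers hne
  exact (isExposed_maximizers P c).isExtreme

lemma IsFace.convex {P F : Set (E d)} (hP : IsPolytope P) (hF : IsFace P F) : Convex ℝ F := by
  rcases hF with rfl | rfl | ⟨c, -, rfl⟩
  · exact convex_empty
  · exact hP.convex
  · exact maximizers_convex hP.convex c

lemma IsFace.compact {P F : Set (E d)} (hP : IsPolytope P) (hF : IsFace P F) : IsCompact F := by
  rcases hF with rfl | rfl | ⟨c, -, rfl⟩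
  · exact isCompact_empty
  · exact hP.compact
  · exact hP.compact.of_isClosed_subset (isClosed_maximizers hP.closed c) (maximizers_subset P c)

lemma IsFace.extremePoints_subset {P F : Set (E d)} (hF : IsFace P F) (hne : F.Nonempty) :
    F.extremePoints ℝ ⊆ P.extremePoints ℝ :=
  (hF.isExtreme hne).extremePoints_subset_extremePoints

lemma IsPolytope.extremePoints_finite {P : Set (E d)} (hP : IsPolytope P) :
    (P.extremePoints ℝ).Finite := by
  obtain ⟨V, -, rfl⟩ := hP
  exact V.finite_toSet.subset (extremePoints_convexHull_subset)

lemma IsFace.eq_convexHull_extremePoints {P F : Set (E d)} (hP : IsPolytope P)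
    (hF : IsFace P F) (hne : F.Nonempty) : F = convexHull ℝ (F.extremePoints ℝ) := by
  have hcomp := hF.compact hP
  have hconv := hF.convex hP
  have hfin : (F.extremePoints ℝ).Finite :=
    hP.extremePoints_finite.subset (hF.extremePoints_subset hne)
  have h := closure_convexHull_extremePoints hcomp hconv
  rw [(hfin.isClosed_convexHull ℝ).closure_eq] at h
  exact h.symm

lemma vectorSpan_add_eq {A B : Set (E d)} (hA : A.Nonempty) (hB : B.Nonempty) :
    vectorSpan ℝ (A + B) = vectorSpan ℝ A ⊔ vectorSpan ℝ B := by
  apply le_antisymm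
  · rw [vectorSpan_def, Submodule.span_le]
    rintro v ⟨x, ⟨a, ha, b, hb, rfl⟩, y, ⟨a', ha', b', hb', rfl⟩, rfl⟩
    show (a + b) -ᵥ (a' + b') ∈ _
    have : (a + b) -ᵥ (a' + b') = (a - a') + (b - b') := by
      simp only [vsub_eq_sub]; abel
    rw [this]
    exact Submodule.add_mem _
      (Submodule.mem_sup_left (vsub_mem_vectorSpan ℝ ha ha'))
      (Submodule.mem_sup_right (vsub_mem_vectorSpan ℝ hb hb'))
  · obtain ⟨a0, ha0⟩ := hA
    obtain ⟨b0, hb0⟩ := hB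
    refine sup_le ?_ ?_
    · rw [vectorSpan_def, Submodule.span_le]
      rintro v ⟨a, ha, a', ha', rfl⟩
      show a -ᵥ a' ∈ _
      have : a -ᵥ a' = (a + b0) -ᵥ (a' + b0) := by simp only [vsub_eq_sub]; abel
      rw [this]
      exact vsub_mem_vectorSpan ℝ ⟨a, ha, b0, hb0, rfl⟩ ⟨a', ha', b0, hb0, rfl⟩
    · rw [vectorSpan_def, Submodule.span_le]
      rintro v ⟨b, hb, b', hb', rfl⟩
      show b -ᵥ b' ∈ _
      have : b -ᵥ b' = (a0 + b) -ᵥ (a0 + b') := by simp only [vsub_eq_sub]; abel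
      rw [this]
      exact vsub_mem_vectorSpan ℝ ⟨a0, ha0, b, hb, rfl⟩ ⟨a0, ha0, b', hb', rfl⟩

lemma sum_sets_nonempty {n : ℕ} {P : Fin n → Set (E d)} (h : ∀ i, (P i).Nonempty)
    (s : Finset (Fin n)) : (∑ i ∈ s, P i).Nonempty := by
  classical
  induction s using Finset.induction with
  | empty => exact ⟨0, rfl⟩
  | insert _ _ hns ih => rw [Finset.sum_insert hns]; exact (h _).add ih

lemma vectorSpan_sum_eq {n : ℕ} {P : Fin n → Set (E d)} (h : ∀ i, (P i).Nonempty) :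
    vectorSpan ℝ (∑ i, P i) = ⨆ i, vectorSpan ℝ (P i) := by
  classical
  have key : ∀ s : Finset (Fin n), vectorSpan ℝ (∑ i ∈ s, P i) = s.sup (fun i => vectorSpan ℝ (P i)) := by
    intro s
    induction s using Finset.induction with
    | empty =>
        simp only [Finset.sum_empty, Finset.sup_empty]
        exact vectorSpan_singleton ℝ (0 : E d)
    | insert _ _ hns ih =>
        rw [Finset.sum_insert hns, vectorSpan_add_eq (h _) (sum_sets_nonempty h _),
          Finset.sup_insert, ih]
  rw [key Finset.univ]
  exact Finset.sup_univ_eq_iSup _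

lemma finrank_iSup_le {n : ℕ} (W : Fin n → Submodule ℝ (E d)) :
    Module.finrank ℝ ↥(⨆ i, W i) ≤ ∑ i, Module.finrank ℝ ↥(W i) := by
  classical
  have key : ∀ s : Finset (Fin n),
      Module.finrank ℝ ↥(s.sup W) ≤ ∑ i ∈ s, Module.finrank ℝ ↥(W i) := by
    intro s
    induction s using Finset.induction with
    | empty => simp
    | @insert a s hns ih =>
        rw [Finset.sup_insert, Finset.sum_insert hns]
        refine le_trans ?_ (add_le_add le_rfl ih)
        have h := Submodule.finrank_sup_add_finrank_inf_eq (W a) (s.sup W)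
        omega
  rw [← Finset.sup_univ_eq_iSup]
  simpa using key Finset.univ

lemma finrank_vectorSpan_finset_lt {S : Finset (E d)} (hS : S.Nonempty) :
    Module.finrank ℝ ↥(vectorSpan ℝ (S : Set (E d))) + 1 ≤ S.card := by
  classical
  obtain ⟨p, hp⟩ := hS
  have h1 : vectorSpan ℝ (S : Set (E d)) =
      Submodule.span ℝ (((· -ᵥ p) '' ((S : Set (E d)) \ {p}))) :=
    vectorSpan_eq_span_vsub_set_right_ne ℝ (by exact_mod_cast hp)
  have h2 : ((· -ᵥ p) '' ((S : Set (E d)) \ {p})) = ↑((S.erase p).image (· - p)) := by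
    rw [Finset.coe_image, Finset.coe_erase]
    rfl
  rw [h1, h2]
  have h3 := finrank_span_finset_le_card (R := ℝ) ((S.erase p).image (· - p))
  have h4 : ((S.erase p).image (· - p)).card ≤ (S.erase p).card := Finset.card_image_le
  have h5 : (S.erase p).card = S.card - 1 := Finset.card_erase_of_mem hp
  have h6 : 1 ≤ S.card := Finset.card_pos.2 ⟨p, hp⟩
  unfold Set.finrank at h3
  omega

open Module in
lemma exists_removable {n : ℕ} (S : Fin n → Finset (E d)) (hne : ∀ i, (S i).Nonempty)
    (hbig : finrank ℝ ↥(⨆ i, vectorSpan ℝ ((S i : Set (E d)))) + n < ∑ i, (S i).card) :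
    ∃ (i : Fin n) (v : E d), v ∈ S i ∧ 2 ≤ (S i).card ∧
      (⨆ j, vectorSpan ℝ ((Function.update S i ((S i).erase v) j : Finset (E d)) : Set (E d)))
        = ⨆ j, vectorSpan ℝ ((S j : Set (E d))) := by
  classical
  set W := ⨆ i, vectorSpan ℝ ((S i : Set (E d))) with hW
  choose u hu using hne
  -- index type
  let ι := Σ i : Fin n, {v : E d // v ∈ (S i).erase (u i)}
  let φ : ι → E d := fun σ => (σ.2 : E d) - u σ.1
  have hcard : Fintype.card ι = ∑ i, ((S i).erase (u i)).card := by
    rw [Fintype.card_sigma]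
    congr 1
    ext i
    exact Fintype.card_coe _
  have hcard2 : ∑ i, ((S i).erase (u i)).card = (∑ i, (S i).card) - n := by
    have h1 : ∀ i, ((S i).erase (u i)).card = (S i).card - 1 :=
      fun i => Finset.card_erase_of_mem (hu i)
    have h2 : ∀ i, 1 ≤ (S i).card := fun i => Finset.card_pos.2 ⟨u i, hu i⟩
    calc ∑ i, ((S i).erase (u i)).card = ∑ i, ((S i).card - 1) := by
          exact Finset.sum_congr rfl fun i _ => h1 i
      _ = (∑ i, (S i).card) - n := by
          rw [Finset.sum_tsub_distrib]
          · simp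
          · exact fun i _ => h2 i
  have hspan : ∀ i : Fin n, vectorSpan ℝ ((S i : Set (E d))) =
      Submodule.span ℝ ((fun w => w - u i) '' ((S i).erase (u i) : Set (E d))) := by
    intro i
    have := vectorSpan_eq_span_vsub_set_right_ne ℝ (Finset.mem_coe.2 (hu i))
    rw [this, Finset.coe_erase]
    rfl
  have hφmem : ∀ σ : ι, φ σ ∈ W := by
    intro ⟨i, v, hv⟩
    refine le_iSup (fun i => vectorSpan ℝ ((S i : Set (E d)))) i ?_
    show _ ∈ vectorSpan ℝ ((S i : Set (E d)))
    rw [hspan i]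
    exact Submodule.subset_span ⟨v, by exact_mod_cast hv, rfl⟩
  have hnotli : ¬ LinearIndependent ℝ φ := by
    intro hli
    have h1 : finrank ℝ ↥(Submodule.span ℝ (Set.range φ)) = Fintype.card ι :=
      finrank_span_eq_card hli
    have h2 : Submodule.span ℝ (Set.range φ) ≤ W := by
      rw [Submodule.span_le]; rintro x ⟨σ, rfl⟩; exact hφmem σ
    have h3 := Submodule.finrank_mono h2
    omega
  rw [Fintype.not_linearIndependent_iff] at hnotli
  obtain ⟨g, hg0, σ0, hgσ0⟩ := hnotli
  obtain ⟨i0, v0, hv0⟩ := σ0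
  have hv0S : v0 ∈ S i0 := Finset.mem_of_mem_erase hv0
  have hv0u : v0 ≠ u i0 := Finset.ne_of_mem_erase hv0
  refine ⟨i0, v0, hv0S, ?_, ?_⟩
  · exact Finset.one_lt_card.2 ⟨v0, hv0S, u i0, hu i0, hv0u⟩
  · set S' := Function.update S i0 ((S i0).erase v0) with hS'
    set W' := ⨆ j, vectorSpan ℝ ((S' j : Set (E d))) with hW'
    have hsub : ∀ j, S' j ⊆ S j := by
      intro j
      rcases eq_or_ne j i0 with rfl | hj
      · rw [hS', Function.update_self]; exact Finset.erase_subset _ _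
      · rw [hS', Function.update_of_ne hj]
    have hle : W' ≤ W := iSup_mono fun j => vectorSpan_mono ℝ (Finset.coe_subset.2 (hsub j))
    refine le_antisymm hle ?_
    -- all φ σ with σ ≠ σ0 are in W'
    have hmem' : ∀ σ : ι, σ ≠ ⟨i0, v0, hv0⟩ → φ σ ∈ W' := by
      rintro ⟨j, w, hw⟩ hσ
      rcases eq_or_ne j i0 with rfl | hj
      · have hwv : w ≠ v0 := by
          intro h
          apply hσ
          subst h
          rfl
        have hw1 : w ∈ (S j).erase v0 :=
          Finset.mem_erase.2 ⟨hwv, Finset.mem_of_mem_erase hw⟩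
        have hu1 : u j ∈ (S j).erase v0 := Finset.mem_erase.2 ⟨(Ne.symm hv0u), hu j⟩
        refine le_iSup (fun j => vectorSpan ℝ ((S' j : Set (E d)))) j ?_
        show _ ∈ vectorSpan ℝ ((S' j : Set (E d)))
        have : S' j = (S j).erase v0 := by rw [hS', Function.update_self]
        rw [this]
        exact vsub_mem_vectorSpan ℝ (Finset.mem_coe.2 hw1) (Finset.mem_coe.2 hu1)
      · refine le_iSup (fun j => vectorSpan ℝ ((S' j : Set (E d)))) j ?_
        show _ ∈ vectorSpan ℝ ((S' j : Set (E d)))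
        have : S' j = S j := by rw [hS', Function.update_of_ne hj]
        rw [this]
        exact vsub_mem_vectorSpan ℝ (Finset.mem_coe.2 (Finset.mem_of_mem_erase hw))
          (Finset.mem_coe.2 (hu j))
    -- φ σ0 also in W'
    have hσ0mem : φ ⟨i0, v0, hv0⟩ ∈ W' := by
      have hsum : g ⟨i0, v0, hv0⟩ • φ ⟨i0, v0, hv0⟩ =
          - ∑ σ ∈ Finset.univ.erase ⟨i0, v0, hv0⟩, g σ • φ σ := by
        rw [← Finset.sum_erase_add Finset.univ _
          (Finset.mem_univ (⟨i0, ⟨v0, hv0⟩⟩ : ι))] at hg0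
        exact eq_neg_of_add_eq_zero_right hg0
      have hin : - ∑ σ ∈ Finset.univ.erase ⟨i0, v0, hv0⟩, g σ • φ σ ∈ W' := by
        refine Submodule.neg_mem _ (Submodule.sum_mem _ fun σ hσ => ?_)
        exact Submodule.smul_mem _ _ (hmem' σ (Finset.ne_of_mem_erase hσ))
      have : φ ⟨i0, v0, hv0⟩ = (g ⟨i0, v0, hv0⟩)⁻¹ • (g ⟨i0, v0, hv0⟩ • φ ⟨i0, v0, hv0⟩) := by
        rw [smul_smul, inv_mul_cancel₀ hgσ0, one_smul]
      rw [this, hsum]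
      exact Submodule.smul_mem _ _ hin
    have hallφ : ∀ σ : ι, φ σ ∈ W' := by
      intro σ
      by_cases h : σ = ⟨i0, v0, hv0⟩
      · rw [h]; exact hσ0mem
      · exact hmem' σ h
    rw [hW]
    refine iSup_le fun j => ?_
    rw [hspan j, Submodule.span_le]
    rintro x ⟨w, hw, rfl⟩
    exact hallφ ⟨j, w, by exact_mod_cast hw⟩

open Module in
lemma greedy_shrink {n : ℕ} (m : ℕ) (S : Fin n → Finset (E d)) (hne : ∀ i, (S i).Nonempty)
    (hm : ∑ i, (S i).card = m)
    (htarget : finrank ℝ ↥(⨆ i, vectorSpan ℝ ((S i : Set (E d)))) + n ≤ m) :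
    ∃ T : Fin n → Finset (E d), (∀ i, T i ⊆ S i) ∧ (∀ i, (T i).Nonempty) ∧
      (∑ i, (T i).card = finrank ℝ ↥(⨆ i, vectorSpan ℝ ((S i : Set (E d)))) + n) ∧
      (⨆ i, vectorSpan ℝ ((T i : Set (E d)))) = ⨆ i, vectorSpan ℝ ((S i : Set (E d))) := by
  classical
  induction m using Nat.strong_induction_on generalizing S with
  | _ m ih =>
    rcases eq_or_lt_of_le htarget with heq | hlt
    · exact ⟨S, fun i => subset_rfl, hne, by omega, rfl⟩
    · obtain ⟨i, v, hvS, hcard2, hsup⟩ := exists_removable S hne (by omega)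
      set S' := Function.update S i ((S i).erase v) with hS'
      have hne' : ∀ j, (S' j).Nonempty := by
        intro j
        rcases eq_or_ne j i with rfl | hj
        · rw [hS', Function.update_self]
          rw [← Finset.card_pos, Finset.card_erase_of_mem hvS]
          omega
        · rw [hS', Function.update_of_ne hj]; exact hne j
      have hm' : ∑ j, (S' j).card = m - 1 := by
        have hsplit : ∀ (f : Fin n → Finset (E d)),
            ∑ j, (f j).card = ∑ j ∈ Finset.univ.erase i, (f j).card + (f i).card :=
          fun f => (Finset.sum_erase_add _ _ (Finset.mem_univ i)).symm
        have hco : ∑ j ∈ Finset.univ.erase i, (S' j).card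
            = ∑ j ∈ Finset.univ.erase i, (S j).card := by
          refine Finset.sum_congr rfl fun j hj => ?_
          rw [hS', Function.update_of_ne (Finset.ne_of_mem_erase hj)]
        have hcu : (S' i).card = (S i).card - 1 := by
          rw [hS', Function.update_self, Finset.card_erase_of_mem hvS]
        have h1 : 1 ≤ (S i).card := by omega
        rw [hsplit S] at hm
        rw [hsplit S', hco, hcu]
        omega
      have htarget' : finrank ℝ ↥(⨆ j, vectorSpan ℝ ((S' j : Set (E d)))) + n ≤ m - 1 := by
        rw [hsup]; omega
      obtain ⟨T, hT1, hT2, hT3, hT4⟩ := ih (m - 1) (by omega) S' hne' hm' htarget'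
      refine ⟨T, ?_, hT2, ?_, ?_⟩
      · intro j
        refine (hT1 j).trans ?_
        rcases eq_or_ne j i with rfl | hj
        · rw [hS', Function.update_self]; exact Finset.erase_subset _ _
        · rw [hS', Function.update_of_ne hj]
      · rw [hT3, hsup]
      · rw [hT4, hsup]



lemma dimSet_eq_finrank_vectorSpan (F : Set (E d)) :
    dimSet F = Module.finrank ℝ ↥(vectorSpan ℝ F) := by
  rw [dimSet, direction_affineSpan]

lemma face_eq_inter_affineSpan {P F : Set (E d)} (hF : IsFace P F) (hne : F.Nonempty) :
    F = P ∩ (affineSpan ℝ F : Set (E d)) := by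
  rcases hF with rfl | rfl | ⟨c, -, rfl⟩
  · exact absurd hne (by simp)
  · exact (Set.inter_eq_left.2 fun x hx => subset_affineSpan ℝ _ hx).symm
  · obtain ⟨f, hf⟩ := hne
    apply Set.Subset.antisymm
    · exact fun x hx => ⟨hx.1, subset_affineSpan ℝ _ hx⟩
    · rintro x ⟨hxP, hxA⟩
      -- affine span of F is contained in the level set of ⟪c, ·⟫
      have hlevel : ∀ y ∈ affineSpan ℝ (maximizers P c), ⟪c, y⟫ = ⟪c, f⟫ := by
        have hle : affineSpan ℝ (maximizers P c) ≤
            AffineSubspace.comap ((innerSL ℝ c).toLinearMap.toAffineMap)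
              (AffineSubspace.mk' (⟪c, f⟫ : ℝ) ⊥) := by
          rw [affineSpan_le]
          intro y hy
          show (innerSL ℝ c).toLinearMap.toAffineMap y ∈ AffineSubspace.mk' (⟪c, f⟫ : ℝ) (⊥ : Submodule ℝ ℝ)
          rw [AffineSubspace.mem_mk', Submodule.mem_bot, vsub_eq_sub,
            sub_eq_zero]
          show ⟪c, y⟫ = ⟪c, f⟫
          rw [← real_inner_comm c y, ← real_inner_comm c f]
          exact le_antisymm (hf.2 y hy.1) (hy.2 f hf.1)
        intro y hy
        have h2 : (innerSL ℝ c).toLinearMap.toAffineMap y ∈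
            AffineSubspace.mk' (⟪c, f⟫ : ℝ) (⊥ : Submodule ℝ ℝ) := hle hy
        rw [AffineSubspace.mem_mk', Submodule.mem_bot, vsub_eq_sub,
          sub_eq_zero] at h2
        exact h2
      refine ⟨hxP, fun y hy => ?_⟩
      have hx : ⟪c, x⟫ = ⟪c, f⟫ := hlevel x hxA
      rw [← real_inner_comm c x, ← real_inner_comm c f] at hx
      rw [hx]
      exact hf.2 y hy

lemma extremePoint_isFace {P : Set (E d)} (hP : IsPolytope P)
    {x : E d} (hx : x ∈ P.extremePoints ℝ) : IsFace P {x} := by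
  classical
  obtain ⟨V, hV, rfl⟩ := hP
  have hxV : x ∈ V := extremePoints_convexHull_subset hx
  by_cases hsing : V = {x}
  · subst hsing
    right; left
    simp
  · -- V \ {x} nonempty
    have hVx : ((V.erase x : Finset (E d)) : Set (E d)).Nonempty := by
      rw [Finset.coe_nonempty, Finset.nonempty_iff_ne_empty]
      intro h
      apply hsing
      refine Finset.eq_singleton_iff_unique_mem.2 ⟨hxV, fun z hz => ?_⟩
      by_contra hzx
      have : z ∈ V.erase x := Finset.mem_erase.2 ⟨hzx, hz⟩
      rw [h] at this
      exact absurd this (Finset.notMem_empty z)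
    have hxnot : x ∉ convexHull ℝ ((V.erase x : Finset (E d)) : Set (E d)) := by
      intro hmem
      have h1 : x ∈ (convexHull ℝ ((V.erase x : Finset (E d)) : Set (E d))).extremePoints ℝ :=
        inter_extremePoints_subset_extremePoints_of_subset
          (convexHull_mono (by simp [Finset.coe_erase, Set.diff_subset]))
          ⟨hmem, hx⟩
      have h2 := extremePoints_convexHull_subset h1
      rw [Finset.coe_erase] at h2
      exact h2.2 rfl
    obtain ⟨l, u, hlu, hux⟩ := geometric_hahn_banach_closed_point
      (convex_convexHull ℝ _) ((V.erase x).finite_toSet.isClosed_convexHull ℝ) hxnot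
    obtain ⟨c, hc⟩ := (InnerProductSpace.toDual ℝ (E d)).surjective l
    have hcy : ∀ y, ⟪y, c⟫ = l y := by
      intro y
      rw [real_inner_comm]
      calc ⟪c, y⟫ = (InnerProductSpace.toDual ℝ (E d)) c y := rfl
        _ = l y := by rw [hc]
    have hVdecomp : (V : Set (E d)) = insert x ((V.erase x : Finset (E d)) : Set (E d)) := by
      rw [← Finset.coe_insert, Finset.insert_erase hxV]
    have hmem_decomp : ∀ y ∈ convexHull ℝ (V : Set (E d)),
        ∃ a b : ℝ, ∃ z ∈ convexHull ℝ ((V.erase x : Finset (E d)) : Set (E d)),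
          0 ≤ a ∧ 0 ≤ b ∧ a + b = 1 ∧ a • x + b • z = y := by
      intro y hy
      rw [hVdecomp, convexHull_insert hVx, mem_convexJoin] at hy
      obtain ⟨x', hx', z, hz, hseg⟩ := hy
      rw [Set.mem_singleton_iff] at hx'
      subst hx'
      obtain ⟨a, b, ha, hb, hab, hy⟩ := hseg
      exact ⟨a, b, z, hz, ha, hb, hab, hy⟩
    have hlx : ∀ z ∈ convexHull ℝ ((V.erase x : Finset (E d)) : Set (E d)), l z < l x := by
      intro z hz
      exact lt_trans (hlu z hz) hux
    right; right
    refine ⟨c, ?_, ?_⟩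
    · intro hc0
      subst hc0
      obtain ⟨z, hz⟩ := hVx
      have h0 : l z < u := hlu z (subset_convexHull ℝ _ hz)
      have hzero : ∀ y, l y = 0 := by
        intro y
        rw [← hcy y, inner_zero_right]
      linarith [hzero z, hzero x]
    · apply Set.Subset.antisymm
      · intro y hy
        rw [Set.mem_singleton_iff] at hy
        rw [hy]
        refine ⟨subset_convexHull ℝ _ hxV, fun z hz => ?_⟩
        rw [hcy z, hcy x]
        obtain ⟨a, b, w, hw, ha, hb, hab, hzeq⟩ := hmem_decomp z hz
        rw [← hzeq]
        have : l (a • x + b • w) = a * l x + b * l w := by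
          simp [map_add, map_smul]
        rw [this]
        have h3 : b * l w ≤ b * l x := mul_le_mul_of_nonneg_left (hlx w hw).le hb
        have h4 : a * l x + b * l x = l x := by rw [← add_mul, hab, one_mul]
        linarith
      · rintro y ⟨hyP, hymax⟩
        have h1 : l x ≤ l y := by
          have := hymax x (subset_convexHull ℝ _ hxV)
          rw [hcy x, hcy y] at this
          exact this
        obtain ⟨a, b, w, hw, ha, hb, hab, hyeq⟩ := hmem_decomp y hyP
        have hly : l y = a * l x + b * l w := by
          rw [← hyeq]
          simp [map_add, map_smul]
        have hb0 : b = 0 := by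
          by_contra hbne
          have hbpos : 0 < b := lt_of_le_of_ne hb (Ne.symm hbne)
          have h3 : b * l w < b * l x := mul_lt_mul_of_pos_left (hlx w hw) hbpos
          have h4 : a * l x + b * l x = l x := by rw [← add_mul, hab, one_mul]
          linarith
        have ha1 : a = 1 := by linarith
        rw [Set.mem_singleton_iff, ← hyeq, hb0, ha1]
        simp

lemma dimSet_singleton (x : E d) : dimSet ({x} : Set (E d)) = 0 := by
  rw [dimSet_eq_finrank_vectorSpan, vectorSpan_singleton]
  exact finrank_bot ℝ _

lemma IsPolytope.faces_finite {P : Set (E d)} (hP : IsPolytope P) :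
    {F : Set (E d) | IsFace P F ∧ F.Nonempty}.Finite := by
  have hinj : Set.InjOn (fun F => F.extremePoints ℝ)
      {F : Set (E d) | IsFace P F ∧ F.Nonempty} := by
    intro F1 h1 F2 h2 heq
    have heq' : F1.extremePoints ℝ = F2.extremePoints ℝ := heq
    rw [h1.1.eq_convexHull_extremePoints hP h1.2, heq',
      ← h2.1.eq_convexHull_extremePoints hP h2.2]
  have himg : (fun F => F.extremePoints ℝ) '' {F : Set (E d) | IsFace P F ∧ F.Nonempty}
      ⊆ {t | t ⊆ P.extremePoints ℝ} := by
    rintro t ⟨F, hF, rfl⟩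
    exact hF.1.extremePoints_subset hF.2
  exact Set.Finite.of_finite_image
    (hP.extremePoints_finite.finite_subsets.subset himg) hinj

lemma ncard_extremePoints_le_fVec0 {P : Set (E d)} (hP : IsPolytope P) :
    (P.extremePoints ℝ).ncard ≤ fVec P 0 := by
  have hinj : Set.InjOn (fun x => ({x} : Set (E d))) (P.extremePoints ℝ) := by
    intro x _ y _ h
    simpa [Set.singleton_eq_singleton_iff] using h
  have himg : (fun x => ({x} : Set (E d))) '' (P.extremePoints ℝ)
      ⊆ {F : Set (E d) | IsFace P F ∧ F.Nonempty ∧ dimSet F = 0} := by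
    rintro t ⟨x, hx, rfl⟩
    exact ⟨extremePoint_isFace hP hx, ⟨x, rfl⟩, dimSet_singleton x⟩
  calc (P.extremePoints ℝ).ncard
      = ((fun x => ({x} : Set (E d))) '' (P.extremePoints ℝ)).ncard :=
        (Set.ncard_image_of_injOn hinj).symm
    _ ≤ fVec P 0 := Set.ncard_le_ncard himg
        ((hP.faces_finite.subset (fun F hF => ⟨hF.1, hF.2.1⟩)))

lemma face_dim_lt_card {P F : Set (E d)} (hP : IsPolytope P) (hF : IsFace P F)
    (hne : F.Nonempty) :
    Module.finrank ℝ ↥(vectorSpan ℝ F) + 1 ≤ (P.extremePoints ℝ ∩ F).ncard := by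
  classical
  have hEfin : (F.extremePoints ℝ).Finite :=
    hP.extremePoints_finite.subset (hF.extremePoints_subset hne)
  have hFeq := hF.eq_convexHull_extremePoints hP hne
  have hsub : F.extremePoints ℝ ⊆ P.extremePoints ℝ ∩ F :=
    fun x hx => ⟨hF.extremePoints_subset hne hx, extremePoints_subset hx⟩
  have hfin2 : (P.extremePoints ℝ ∩ F).Finite :=
    hP.extremePoints_finite.subset Set.inter_subset_left
  have hvs : vectorSpan ℝ F = vectorSpan ℝ (P.extremePoints ℝ ∩ F) := by
    apply le_antisymm
    · conv_lhs => rw [hFeq]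
      rw [← direction_affineSpan, affineSpan_convexHull, direction_affineSpan]
      exact vectorSpan_mono ℝ hsub
    · exact vectorSpan_mono ℝ Set.inter_subset_right
  rw [hvs]
  have hne2 : (P.extremePoints ℝ ∩ F).Nonempty := by
    rcases Set.eq_empty_or_nonempty (F.extremePoints ℝ) with h | h
    · rw [h] at hFeq
      simp only [convexHull_empty] at hFeq
      exact absurd hFeq (Set.nonempty_iff_ne_empty.1 hne)
    · exact h.mono hsub
  have := finrank_vectorSpan_finset_lt (S := hfin2.toFinset) (by
    rw [Finset.nonempty_iff_ne_empty, Ne, Set.Finite.toFinset_eq_empty]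
    exact Set.nonempty_iff_ne_empty.1 hne2)
  rw [hfin2.coe_toFinset] at this
  rw [Set.ncard_eq_toFinset_card _ hfin2]
  exact this

lemma face_inter_nonempty {P F : Set (E d)} (hP : IsPolytope P) (hF : IsFace P F)
    (hne : F.Nonempty) : (P.extremePoints ℝ ∩ F).Nonempty := by
  have hFeq := hF.eq_convexHull_extremePoints hP hne
  have hsub : F.extremePoints ℝ ⊆ P.extremePoints ℝ ∩ F :=
    fun x hx => ⟨hF.extremePoints_subset hne hx, extremePoints_subset hx⟩
  rcases Set.eq_empty_or_nonempty (F.extremePoints ℝ) with h | h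
  · rw [h] at hFeq
    simp only [convexHull_empty] at hFeq
    exact absurd hFeq (Set.nonempty_iff_ne_empty.1 hne)
  · exact h.mono hsub

lemma face_vectorSpan_inter {P F : Set (E d)} (hP : IsPolytope P) (hF : IsFace P F)
    (hne : F.Nonempty) :
    vectorSpan ℝ (P.extremePoints ℝ ∩ F) = vectorSpan ℝ F := by
  have hFeq := hF.eq_convexHull_extremePoints hP hne
  have hsub : F.extremePoints ℝ ⊆ P.extremePoints ℝ ∩ F :=
    fun x hx => ⟨hF.extremePoints_subset hne hx, extremePoints_subset hx⟩
  apply le_antisymm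
  · exact vectorSpan_mono ℝ Set.inter_subset_right
  · conv_lhs => rw [hFeq]
    rw [← direction_affineSpan, affineSpan_convexHull, direction_affineSpan]
    exact vectorSpan_mono ℝ hsub

lemma sum_sets_mono {n : ℕ} {A B : Fin n → Set (E d)} (h : ∀ i, A i ⊆ B i) :
    ∑ i, A i ⊆ ∑ i, B i := by
  classical
  induction (Finset.univ : Finset (Fin n)) using Finset.induction with
  | empty => simp
  | @insert a s hns ih =>
      rw [Finset.sum_insert hns, Finset.sum_insert hns]
      exact Set.add_subset_add (h a) ih

open Module in
lemma exists_good_tuple {n : ℕ} (P : Fin n → Set (E d)) (hP : ∀ i, IsPolytope (P i))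
    {F : Set (E d)} (hF : IsFace (∑ i, P i) F) (hne : F.Nonempty) :
    ∃ T : Fin n → Finset (E d),
      (∀ i, (T i).Nonempty) ∧ (∀ i, ((T i) : Set (E d)) ⊆ (P i).extremePoints ℝ) ∧
      (∑ i, (T i).card = dimSet F + n) ∧
      (∑ i, (convexHull ℝ ((T i : Set (E d))))) ⊆ F ∧
      (⨆ i, vectorSpan ℝ ((T i : Set (E d)))) = vectorSpan ℝ F := by
  classical
  obtain ⟨c, hFc⟩ := hF.exists_maximizers hne
  set G : Fin n → Set (E d) := fun i => maximizers (P i) c with hG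
  have hGface : ∀ i, IsFace (P i) (G i) := by
    intro i
    rcases eq_or_ne c 0 with rfl | hc
    · right; left; exact maximizers_zero (P i)
    · right; right; exact ⟨c, hc, rfl⟩
  have hGne : ∀ i, (G i).Nonempty :=
    fun i => maximizers_nonempty (hP i).compact (hP i).nonempty c
  have hFsum : F = ∑ i, G i := by rw [hFc, maximizers_sum]
  set Wset : Fin n → Set (E d) := fun i => (P i).extremePoints ℝ ∩ G i with hWset
  have hWfin : ∀ i, (Wset i).Finite :=
    fun i => (hP i).extremePoints_finite.subset Set.inter_subset_left
  set W : Fin n → Finset (E d) := fun i => (hWfin i).toFinset with hW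
  have hWcoe : ∀ i, ((W i : Finset (E d)) : Set (E d)) = Wset i :=
    fun i => (hWfin i).coe_toFinset
  have hWne : ∀ i, (W i).Nonempty := by
    intro i
    rw [hW]
    rw [Set.Finite.toFinset_nonempty]
    exact face_inter_nonempty (hP i) (hGface i) (hGne i)
  have hvsW : ∀ i, vectorSpan ℝ ((W i : Finset (E d)) : Set (E d)) = vectorSpan ℝ (G i) := by
    intro i
    rw [hWcoe i]
    exact face_vectorSpan_inter (hP i) (hGface i) (hGne i)
  have hsupW : (⨆ i, vectorSpan ℝ ((W i : Finset (E d)) : Set (E d))) = vectorSpan ℝ F := by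
    rw [hFsum, vectorSpan_sum_eq hGne]
    exact iSup_congr hvsW
  have hcardW : ∀ i, finrank ℝ ↥(vectorSpan ℝ (G i)) + 1 ≤ (W i).card := by
    intro i
    have := face_dim_lt_card (hP i) (hGface i) (hGne i)
    rwa [Set.ncard_eq_toFinset_card _ (hWfin i)] at this
  have htarget : finrank ℝ ↥(⨆ i, vectorSpan ℝ ((W i : Finset (E d)) : Set (E d))) + n
      ≤ ∑ i, (W i).card := by
    have h1 : finrank ℝ ↥(⨆ i, vectorSpan ℝ ((W i : Finset (E d)) : Set (E d)))
        ≤ ∑ i, finrank ℝ ↥(vectorSpan ℝ (G i)) := by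
      refine le_trans (finrank_iSup_le _) ?_
      exact Finset.sum_le_sum fun i _ => le_of_eq (by rw [hvsW i])
    have h2 : ∑ i, (finrank ℝ ↥(vectorSpan ℝ (G i)) + 1) ≤ ∑ i, (W i).card :=
      Finset.sum_le_sum fun i _ => hcardW i
    rw [Finset.sum_add_distrib] at h2
    simpa using le_trans (by omega : finrank ℝ ↥(⨆ i, vectorSpan ℝ ((W i : Finset (E d)) : Set (E d))) + n ≤ ∑ i, finrank ℝ ↥(vectorSpan ℝ (G i)) + n) (by simpa using h2)
  obtain ⟨T, hT1, hT2, hT3, hT4⟩ := greedy_shrink (∑ i, (W i).card) W hWne rfl htarget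
  refine ⟨T, hT2, ?_, ?_, ?_, ?_⟩
  · intro i
    refine le_trans (Finset.coe_subset.2 (hT1 i)) ?_
    rw [hWcoe i]
    exact Set.inter_subset_left
  · rw [hT3, hsupW, dimSet_eq_finrank_vectorSpan]
  · rw [hFsum]
    refine sum_sets_mono fun i => ?_
    refine convexHull_min ?_ ((hGface i).convex (hP i))
    refine le_trans (Finset.coe_subset.2 (hT1 i)) ?_
    rw [hWcoe i]
    exact Set.inter_subset_right
  · rw [hT4, hsupW]

lemma face_determined {n : ℕ} {Q F F' : Set (E d)} {T : Fin n → Finset (E d)}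
    (hF : IsFace Q F) (hneF : F.Nonempty) (hF' : IsFace Q F') (hneF' : F'.Nonempty)
    (hTne : ∀ i, (T i).Nonempty)
    (hCF : (∑ i, convexHull ℝ ((T i : Set (E d)))) ⊆ F)
    (hCF' : (∑ i, convexHull ℝ ((T i : Set (E d)))) ⊆ F')
    (hvF : (⨆ i, vectorSpan ℝ ((T i : Set (E d)))) = vectorSpan ℝ F)
    (hvF' : (⨆ i, vectorSpan ℝ ((T i : Set (E d)))) = vectorSpan ℝ F') :
    F = F' := by
  classical
  set C : Set (E d) := ∑ i, convexHull ℝ ((T i : Set (E d))) with hC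
  have hCne : C.Nonempty := by
    refine sum_sets_nonempty (fun i => ?_) Finset.univ
    exact ((hTne i).to_set).mono (subset_convexHull ℝ _)
  have hvC : vectorSpan ℝ C = ⨆ i, vectorSpan ℝ ((T i : Set (E d))) := by
    rw [hC, vectorSpan_sum_eq (fun i => ((hTne i).to_set).mono (subset_convexHull ℝ _))]
    refine iSup_congr fun i => ?_
    rw [← direction_affineSpan, affineSpan_convexHull, direction_affineSpan]
  have key : ∀ (G : Set (E d)), IsFace Q G → G.Nonempty → C ⊆ G →
      vectorSpan ℝ C = vectorSpan ℝ G → G = Q ∩ (affineSpan ℝ C : Set (E d)) := by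
    intro G hG hneG hCG hvG
    obtain ⟨p, hp⟩ := hCne
    have hspan : affineSpan ℝ C = affineSpan ℝ G := by
      rw [AffineSubspace.eq_iff_direction_eq_of_mem
        (subset_affineSpan ℝ C hp) (subset_affineSpan ℝ G (hCG hp))]
      rw [direction_affineSpan, direction_affineSpan, hvG]
    rw [hspan]
    exact face_eq_inter_affineSpan hG hneG
  rw [key F hF hneF hCF (by rw [hvC, hvF]), key F' hF' hneF' hCF' (by rw [hvC, hvF'])]

theorem trivial_upper_bound_faces {d n : ℕ} (P : Fin n → Set (E d))
    (hP : ∀ i, IsPolytope (P i)) (hn : 1 ≤ n) (k : ℕ) (hk : k + 1 ≤ d) :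
    fVec (∑ i, P i) k ≤
      ∑ s ∈ (Fintype.piFinset fun i => Finset.Icc 1 (fVec (P i) 0)).filter
          (fun s => ∑ i, s i = k + n),
        ∏ i, Nat.choose (fVec (P i) 0) (s i) := by
  classical
  set Q : Set (E d) := ∑ i, P i with hQ
  set Faces : Set (Set (E d)) := {F : Set (E d) | IsFace Q F ∧ F.Nonempty ∧ dimSet F = k}
    with hFaces
  set X : Fin n → Finset (E d) := fun i => ((hP i).extremePoints_finite).toFinset with hX
  have hXcoe : ∀ i, ((X i : Finset (E d)) : Set (E d)) = (P i).extremePoints ℝ :=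
    fun i => ((hP i).extremePoints_finite).coe_toFinset
  have hXcard : ∀ i, (X i).card ≤ fVec (P i) 0 := by
    intro i
    have := ncard_extremePoints_le_fVec0 (hP i)
    rwa [Set.ncard_eq_toFinset_card _ ((hP i).extremePoints_finite)] at this
  have hex : ∀ F ∈ Faces, ∃ T : Fin n → Finset (E d),
      (∀ i, (T i).Nonempty) ∧ (∀ i, T i ⊆ X i) ∧
      (∑ i, (T i).card = k + n) ∧ ((∑ i, convexHull ℝ ((T i : Set (E d)))) ⊆ F) ∧
      (⨆ i, vectorSpan ℝ ((T i : Set (E d)))) = vectorSpan ℝ F := by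
    rintro F ⟨hF, hne, hdim⟩
    obtain ⟨T, h1, h2, h3, h4, h5⟩ := exists_good_tuple P hP hF hne
    refine ⟨T, h1, fun i => ?_, by rw [h3, hdim], h4, h5⟩
    rw [← Finset.coe_subset, hXcoe i]
    exact h2 i
  choose! Ψ hΨ1 hΨ2 hΨ3 hΨ4 hΨ5 using hex
  have hinj : Set.InjOn Ψ Faces := by
    intro F hF F' hF' heq
    refine face_determined (hF.1) (hF.2.1) (hF'.1) (hF'.2.1) (hΨ1 F hF) (hΨ4 F hF)
      ?_ (hΨ5 F hF) ?_
    · rw [heq]; exact hΨ4 F' hF'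
    · rw [heq]; exact hΨ5 F' hF'
  set A : Finset (Fin n → Finset (E d)) :=
    (Fintype.piFinset fun i => (X i).powerset).filter
      (fun T => (∀ i, (T i).Nonempty) ∧ ∑ i, (T i).card = k + n) with hA
  have himg : Ψ '' Faces ⊆ (A : Set (Fin n → Finset (E d))) := by
    rintro t ⟨F, hF, rfl⟩
    rw [Finset.mem_coe, hA, Finset.mem_filter, Fintype.mem_piFinset]
    exact ⟨fun i => Finset.mem_powerset.2 (hΨ2 F hF i), hΨ1 F hF, hΨ3 F hF⟩
  have hcard1 : fVec Q k ≤ A.card := by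
    show Faces.ncard ≤ A.card
    calc Faces.ncard = (Ψ '' Faces).ncard := (Set.ncard_image_of_injOn hinj).symm
      _ ≤ (A : Set (Fin n → Finset (E d))).ncard :=
          Set.ncard_le_ncard himg A.finite_toSet
      _ = A.card := Set.ncard_coe_finset A
  set B : Finset (Fin n → ℕ) :=
    (Fintype.piFinset fun i => Finset.Icc 1 ((X i).card)).filter
      (fun s => ∑ i, s i = k + n) with hB
  have hcard2 : A.card ≤ ∑ s ∈ B, ∏ i, ((X i).card).choose (s i) := by
    have hmem : ∀ T ∈ A, (fun i => (T i).card) ∈ B := by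
      intro T hT
      rw [hA, Finset.mem_filter, Fintype.mem_piFinset] at hT
      rw [hB, Finset.mem_filter, Fintype.mem_piFinset]
      refine ⟨fun i => Finset.mem_Icc.2 ⟨Finset.card_pos.2 (hT.2.1 i),
        Finset.card_le_card (Finset.mem_powerset.1 (hT.1 i))⟩, hT.2.2⟩
    rw [Finset.card_eq_sum_card_fiberwise hmem]
    refine Finset.sum_le_sum fun s hs => ?_
    have hsubfib : A.filter (fun T => (fun i => (T i).card) = s)
        ⊆ Fintype.piFinset fun i => (X i).powersetCard (s i) := by
      intro T hT
      rw [Finset.mem_filter] at hT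
      obtain ⟨hTA, hTs⟩ := hT
      rw [hA, Finset.mem_filter, Fintype.mem_piFinset] at hTA
      rw [Fintype.mem_piFinset]
      intro i
      rw [Finset.mem_powersetCard]
      exact ⟨Finset.mem_powerset.1 (hTA.1 i), congrFun hTs i⟩
    calc (A.filter (fun T => (fun i => (T i).card) = s)).card
        ≤ (Fintype.piFinset fun i => (X i).powersetCard (s i)).card :=
          Finset.card_le_card hsubfib
      _ = ∏ i, ((X i).powersetCard (s i)).card := Fintype.card_piFinset _
      _ = ∏ i, ((X i).card).choose (s i) := by
          refine Finset.prod_congr rfl fun i _ => ?_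
          rw [Finset.card_powersetCard]
  have hcard3 : ∑ s ∈ B, ∏ i, ((X i).card).choose (s i) ≤
      ∑ s ∈ (Fintype.piFinset fun i => Finset.Icc 1 (fVec (P i) 0)).filter
          (fun s => ∑ i, s i = k + n),
        ∏ i, Nat.choose (fVec (P i) 0) (s i) := by
    have hBsub : B ⊆ (Fintype.piFinset fun i => Finset.Icc 1 (fVec (P i) 0)).filter
        (fun s => ∑ i, s i = k + n) := by
      intro s hs
      rw [hB, Finset.mem_filter, Fintype.mem_piFinset] at hs
      rw [Finset.mem_filter, Fintype.mem_piFinset]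
      refine ⟨fun i => ?_, hs.2⟩
      have := Finset.mem_Icc.1 (hs.1 i)
      exact Finset.mem_Icc.2 ⟨this.1, le_trans this.2 (hXcard i)⟩
    calc ∑ s ∈ B, ∏ i, ((X i).card).choose (s i)
        ≤ ∑ s ∈ B, ∏ i, Nat.choose (fVec (P i) 0) (s i) := by
          refine Finset.sum_le_sum fun s _ => ?_
          exact Finset.prod_le_prod' fun i _ => Nat.choose_le_choose _ (hXcard i)
      _ ≤ _ := Finset.sum_le_sum_of_subset hBsub
  exact le_trans hcard1 (le_trans hcard2 hcard3)
end
end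

section
/- For every dimension d ≥ 4, every 1 ≤ n ≤ ⌊d/2⌋, and every choice of integers m_1,…,m_n ≥ 1, there exist polytopes P_1,…,P_n in ℝ^d with f_0(P_i) = m_i for each i (namely, convex hulls of pairwise distinct points on the moment curve t ↦ (t, t², …, t^d)), such that for all 0 ≤ k ≤ ⌊d/2⌋ − n the trivial upper bound for the number of k-faces is attained: f_k(P_1 + ⋯ + P_n) = Σ ∏_{i=1}^n C(m_i, s_i), where the sum ranges over all integer tuples (s_1,…,s_n) with 1 ≤ s_i ≤ m_i and s_1 + ⋯ + s_n = k + n, and C denotes the binomial coefficient. -/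
open Pointwise RealInnerProductSpace

noncomputable section

def momentCurve (d : ℕ) (t : ℝ) : E d :=
  (EuclideanSpace.equiv (Fin d) ℝ).symm (fun i => t ^ ((i : ℕ) + 1))

lemma momentCurve_apply (d : ℕ) (t : ℝ) (i : Fin d) : momentCurve d t i = t ^ ((i:ℕ)+1) := rfl

lemma inner_momentCurve {d : ℕ} (c : E d) (t : ℝ) :
    ⟪momentCurve d t, c⟫ = ∑ i : Fin d, c i * t ^ ((i:ℕ)+1) := by
  simp [PiLp.inner_apply, momentCurve_apply, mul_comm]

lemma inner_le_max_on_convexHull {d : ℕ} {V : Finset (E d)} {c x : E d}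
    (hx : x ∈ convexHull ℝ (V : Set (E d))) {M : ℝ} (hM : ∀ u ∈ V, ⟪u, c⟫ ≤ M) :
    ⟪x, c⟫ ≤ M := by
  obtain ⟨w, hw0, hw1, hwx⟩ := Finset.mem_convexHull'.mp hx
  calc ⟪x,c⟫ = ∑ y ∈ V, w y * ⟪y,c⟫ := by
        rw [← hwx]; rw [sum_inner]; exact Finset.sum_congr rfl fun y _ => real_inner_smul_left _ _ _
  _ ≤ ∑ y ∈ V, w y * M :=
      Finset.sum_le_sum fun y hy => mul_le_mul_of_nonneg_left (hM y hy) (hw0 y hy)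
  _ = M := by rw [← Finset.sum_mul, hw1, one_mul]
lemma inner_eq_on_convexHull {d : ℕ} {V : Finset (E d)} {c x : E d}
    (hx : x ∈ convexHull ℝ (V : Set (E d))) {M : ℝ} (hM : ∀ u ∈ V, ⟪u, c⟫ = M) :
    ⟪x, c⟫ = M := by
  refine le_antisymm (inner_le_max_on_convexHull hx fun u hu => (hM u hu).le) ?_
  have h2 : ⟪x, -c⟫ ≤ -M := inner_le_max_on_convexHull hx (fun u hu => by
    rw [inner_neg_right, hM u hu])
  rw [inner_neg_right] at h2; linarith

lemma maximizers_convexHull {d : ℕ} (V : Finset (E d)) (hV : V.Nonempty) (c : E d) :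
    maximizers (convexHull ℝ (V : Set (E d))) c
      = convexHull ℝ ((V.filter (fun v => ∀ u ∈ V, ⟪u, c⟫ ≤ ⟪v, c⟫) : Finset (E d)) : Set (E d)) := by
  obtain ⟨v0, hv0, hmax⟩ := V.exists_max_image (fun v => ⟪v, c⟫) hV
  set M : ℝ := ⟪v0, c⟫ with hM
  have hfe : ∀ v ∈ V.filter (fun v => ∀ u ∈ V, ⟪u, c⟫ ≤ ⟪v, c⟫), ⟪v, c⟫ = M := by
    intro v hv
    rw [Finset.mem_filter] at hv
    exact le_antisymm (hmax v hv.1) (hv.2 v0 hv0)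
  apply Set.Subset.antisymm
  · rintro x ⟨hxP, hxmax⟩
    have hxM : ⟪x, c⟫ = M := by
      refine le_antisymm (inner_le_max_on_convexHull hxP hmax) ?_
      exact hxmax v0 (subset_convexHull ℝ _ hv0)
    obtain ⟨w, hw0, hw1, hwx⟩ := Finset.mem_convexHull'.mp hxP
    have hsum0 : ∑ y ∈ V, w y * (M - ⟪y, c⟫) = 0 := by
      have : ⟪x, c⟫ = ∑ y ∈ V, w y * ⟪y, c⟫ := by
        rw [← hwx, sum_inner]
        exact Finset.sum_congr rfl fun y _ => real_inner_smul_left _ _ _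
      have h2 : ∑ y ∈ V, w y * M = M := by rw [← Finset.sum_mul, hw1, one_mul]
      simp only [mul_sub]
      rw [Finset.sum_sub_distrib, h2, ← this, hxM, sub_self]
    have hzero : ∀ y ∈ V, w y * (M - ⟪y, c⟫) = 0 := by
      intro y hy
      exact (Finset.sum_eq_zero_iff_of_nonneg (fun z hz =>
        mul_nonneg (hw0 z hz) (sub_nonneg.mpr (hmax z hz)))).mp hsum0 y hy
    have hw0' : ∀ y ∈ V, y ∉ V.filter (fun v => ∀ u ∈ V, ⟪u, c⟫ ≤ ⟪v, c⟫) → w y = 0 := by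
      intro y hy hyf
      rw [Finset.mem_filter] at hyf
      push_neg at hyf
      obtain ⟨u, hu, hlt⟩ := hyf hy
      have hyM : ⟪y, c⟫ < M := lt_of_lt_of_le hlt (hmax u hu)
      rcases mul_eq_zero.mp (hzero y hy) with h | h
      · exact h
      · exfalso; linarith [sub_eq_zero.mp h]
    refine Finset.mem_convexHull'.mpr ⟨w, fun y hy => hw0 y (Finset.filter_subset _ _ hy), ?_, ?_⟩
    · rw [Finset.sum_filter_of_ne]
      · exact hw1
      · intro y hy hne
        by_contra hc
        exact hne (hw0' y hy (by simpa [Finset.mem_filter, hy] using hc))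
    · rw [← hwx]
      refine Finset.sum_subset (Finset.filter_subset _ _) ?_
      intro y hy hyf
      rw [hw0' y hy hyf, zero_smul]
  · intro x hx
    have hxV : x ∈ convexHull ℝ (V : Set (E d)) :=
      convexHull_mono (by exact_mod_cast Finset.filter_subset _ _) hx
    refine ⟨hxV, fun y hy => ?_⟩
    have hxM : ⟪x, c⟫ = M := inner_eq_on_convexHull hx hfe
    rw [hxM]
    exact inner_le_max_on_convexHull hy hmax

lemma argmax_sum_pi {ι : Type*} [Fintype ι] [DecidableEq ι] {κ : ι → Type*} [∀ i, Fintype (κ i)]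
    (φ : (i : ι) → κ i → ℝ) (σ : (i : ι) → κ i) :
    (∀ τ : (i : ι) → κ i, ∑ i, φ i (τ i) ≤ ∑ i, φ i (σ i)) ↔ ∀ i (j : κ i), φ i j ≤ φ i (σ i) := by
  constructor
  · intro h i j
    have key := h (Function.update σ i j)
    have heq : ∀ i', φ i' (Function.update σ i j i')
        = Function.update (fun i' => φ i' (σ i')) i (φ i j) i' := by
      intro i'
      rcases eq_or_ne i' i with rfl | hne
      · simp
      · simp [Function.update_of_ne hne]
    rw [Finset.sum_congr rfl (fun i' _ => heq i')] at key
    rw [Finset.sum_update_of_mem (Finset.mem_univ i)] at key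
    have hsig : ∑ i', φ i' (σ i') = φ i (σ i) + ∑ i' ∈ Finset.univ \ {i}, φ i' (σ i') := by
      rw [Finset.sum_eq_add_sum_sdiff_singleton_of_mem (Finset.mem_univ i)]
    rw [hsig] at key
    linarith
  · intro h τ
    exact Finset.sum_le_sum fun i _ => h i (τ i)
lemma inner_momentCurve_poly {d : ℕ} (p : Polynomial ℝ) (hdeg : p.natDegree < d + 1)
    (h0 : p.coeff 0 = 0) (t : ℝ) :
    ⟪momentCurve d t, ((EuclideanSpace.equiv (Fin d) ℝ).symm fun i => p.coeff ((i:ℕ)+1))⟫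
      = p.eval t := by
  rw [inner_momentCurve, Polynomial.eval_eq_sum_range' hdeg, Finset.sum_range_succ']
  have : ∀ i : Fin d,
      ((EuclideanSpace.equiv (Fin d) ℝ).symm fun i : Fin d => p.coeff ((i:ℕ)+1)) i
        = p.coeff ((i:ℕ)+1) := fun i => rfl
  simp only [this, h0, zero_mul, add_zero]
  exact Fin.sum_univ_eq_sum_range (fun k => p.coeff (k + 1) * t ^ (k + 1)) d

lemma exists_c_for_roots {d : ℕ} (R : Finset ℝ) (hR : R.Nonempty) (hcard : 2 * R.card ≤ d) :
    ∃ c : E d, c ≠ 0 ∧ ∃ e0 : ℝ, ∀ t : ℝ,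
      ⟪momentCurve d t, c⟫ ≤ e0 ∧ (⟪momentCurve d t, c⟫ = e0 ↔ t ∈ R) := by
  classical
  set q : Polynomial ℝ := ∏ r ∈ R, (Polynomial.X - Polynomial.C r) ^ 2 with hq
  have hqmonic : q.Monic := Polynomial.monic_prod_of_monic _ _
    (fun r _ => (Polynomial.monic_X_sub_C r).pow 2)
  have hqdeg : q.natDegree = 2 * R.card := by
    rw [hq, Polynomial.natDegree_prod _ _ (fun r _ => ((Polynomial.monic_X_sub_C r).pow 2).ne_zero)]
    simp [Polynomial.natDegree_pow, Polynomial.natDegree_X_sub_C, mul_comm, Finset.sum_const]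
  have hqeval : ∀ t : ℝ, q.eval t = ∏ r ∈ R, (t - r) ^ 2 := by
    intro t; simp [hq, Polynomial.eval_prod]
  have hqnn : ∀ t : ℝ, 0 ≤ q.eval t := by
    intro t; rw [hqeval]; exact Finset.prod_nonneg fun r _ => sq_nonneg _
  have hqzero : ∀ t : ℝ, q.eval t = 0 ↔ t ∈ R := by
    intro t
    rw [hqeval, Finset.prod_eq_zero_iff]
    constructor
    · rintro ⟨r, hr, h⟩
      have : t = r := by
        have := pow_eq_zero_iff (n := 2) (by norm_num) |>.mp h
        linarith [sub_eq_zero.mp this]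
      rwa [this]
    · intro ht; exact ⟨t, ht, by simp⟩
  set p : Polynomial ℝ := Polynomial.C (q.eval 0) - q with hp
  have hK1 : 1 ≤ R.card := hR.card_pos
  have hpdeg : p.natDegree ≤ 2 * R.card := by
    refine le_trans (Polynomial.natDegree_sub_le _ _) ?_
    simp [Polynomial.natDegree_C, hqdeg]
  have hpcoeff : p.coeff (2 * R.card) = -1 := by
    rw [hp, Polynomial.coeff_sub, Polynomial.coeff_C,
      if_neg (by positivity : ¬(2 * R.card = 0)), ← hqdeg]
    rw [show q.coeff q.natDegree = 1 from hqmonic.coeff_natDegree]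
    ring
  have hp0 : p.coeff 0 = 0 := by
    rw [Polynomial.coeff_zero_eq_eval_zero, hp]
    simp
  have hpeval : ∀ t : ℝ, p.eval t = q.eval 0 - q.eval t := by
    intro t; simp [hp]
  set c : E d := (EuclideanSpace.equiv (Fin d) ℝ).symm fun i => p.coeff ((i:ℕ)+1) with hc
  have hinner : ∀ t, ⟪momentCurve d t, c⟫ = p.eval t := by
    intro t
    exact inner_momentCurve_poly p (lt_of_le_of_lt hpdeg (by omega)) hp0 t
  refine ⟨c, ?_, q.eval 0, fun t => ?_⟩
  · intro hc0
    have hlt : 2 * R.card - 1 < d := by omega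
    have : c ⟨2 * R.card - 1, hlt⟩ = p.coeff (2 * R.card - 1 + 1) := rfl
    rw [show 2 * R.card - 1 + 1 = 2 * R.card by omega, hpcoeff] at this
    rw [hc0] at this
    simp at this
  · rw [hinner, hpeval]
    constructor
    · linarith [hqnn t]
    · rw [← hqzero t]
      constructor
      · intro h; linarith
      · intro h; rw [h]; ring
lemma momentCurve_linearIndependent {d N : ℕ} (hNd : N ≤ d) (t : Fin N → ℝ)
    (ht : Function.Injective t) (hpos : ∀ a, 0 < t a) :
    LinearIndependent ℝ (fun a => momentCurve d (t a)) := by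
  classical
  set A : Matrix (Fin N) (Fin N) ℝ := Matrix.of fun a i => t a ^ (i : ℕ) with hA
  set D : Matrix (Fin N) (Fin N) ℝ := Matrix.diagonal t with hD
  set M : Matrix (Fin N) (Fin N) ℝ := Matrix.transpose A * D with hM
  have hMapply : ∀ i a, M i a = t a ^ ((a:ℕ)*0 + (i : ℕ) + 1) := by
    intro i a
    simp [hM, Matrix.mul_apply, hD, Matrix.diagonal, hA, Finset.sum_ite_eq,
      Matrix.transpose_apply, pow_succ]
  have hdet : M.det ≠ 0 := by
    rw [hM, Matrix.det_mul, Matrix.det_transpose, Matrix.det_diagonal]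
    have h1 : A.det ≠ 0 := by
      have : A = Matrix.vandermonde t := rfl
      rw [this]
      exact Matrix.det_vandermonde_ne_zero_iff.mpr ht
    have h2 : (∏ a, t a) ≠ 0 := Finset.prod_ne_zero_iff.mpr fun a _ => (hpos a).ne'
    exact mul_ne_zero h1 h2
  have hcols : LinearIndependent ℝ (fun a => Matrix.transpose M a) :=
    Matrix.linearIndependent_cols_iff_isUnit.mpr
      ((Matrix.isUnit_iff_isUnit_det M).mpr (isUnit_iff_ne_zero.mpr hdet))
  set π : E d →ₗ[ℝ] (Fin N → ℝ) :=
    { toFun := fun x => fun a => x (Fin.castLE hNd a)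
      map_add' := fun x y => by ext a; simp
      map_smul' := fun r x => by ext a; simp } with hπ
  have hcomp : (π ∘ fun a => momentCurve d (t a)) = fun a => Matrix.transpose M a := by
    funext a i
    simp only [hπ, Function.comp_apply, LinearMap.coe_mk, AddHom.coe_mk]
    rw [momentCurve_apply]
    rw [Matrix.transpose_apply, hMapply]
    simp
  exact LinearIndependent.of_comp π (by rw [hcomp]; exact hcols)
lemma sum_update_pi {ι : Type*} [Fintype ι] [DecidableEq ι] {κ : ι → Type*} {M : Type*}
    [AddCommMonoid M] (f : (i : ι) → κ i → M) (σ : (i : ι) → κ i) (i : ι) (j : κ i) :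
    ∑ i', f i' (Function.update σ i j i')
      = f i j + ∑ i' ∈ Finset.univ \ {i}, f i' (σ i') := by
  have heq : ∀ i', f i' (Function.update σ i j i')
      = Function.update (fun i' => f i' (σ i')) i (f i j) i' := by
    intro i'
    rcases eq_or_ne i' i with rfl | hne
    · simp
    · simp [Function.update_of_ne hne]
  rw [Finset.sum_congr rfl fun i' _ => heq i', Finset.sum_update_of_mem (Finset.mem_univ i)]

set_option linter.unusedSectionVars false

section Main

variable {d : ℕ} {ι : Type} [Fintype ι] [DecidableEq ι] {m : ι → ℕ}
  {T : (i : ι) → Fin (m i) → ℝ}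

lemma coeff_zero_of_sum_zero (hTpos : ∀ i j, 0 < T i j)
    (hTinj : Function.Injective fun p : (i : ι) × Fin (m i) => T p.1 p.2)
    (S : Finset ((i : ι) × Fin (m i))) (hS : S.card ≤ d) (g : (i : ι) × Fin (m i) → ℝ)
    (hsum : ∑ p ∈ S, g p • momentCurve d (T p.1 p.2) = 0) : ∀ p ∈ S, g p = 0 := by
  classical
  set e := S.equivFin with he
  set t : Fin S.card → ℝ := fun a => T (e.symm a : S).1.1 (e.symm a : S).1.2 with ht
  have htinj : Function.Injective t := by
    intro a b hab
    have := hTinj hab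
    exact e.symm.injective (Subtype.val_injective this)
  have hli := momentCurve_linearIndependent hS t htinj (fun a => hTpos _ _)
  rw [Fintype.linearIndependent_iff] at hli
  set G : Fin S.card → ℝ := fun a => g (e.symm a : S) with hG
  have hGsum : ∑ a, G a • momentCurve d (t a) = 0 := by
    have h1 : ∑ a, G a • momentCurve d (t a)
        = ∑ x : {x // x ∈ S}, g ↑x • momentCurve d (T (↑x : (i : ι) × Fin (m i)).1 (↑x : (i : ι) × Fin (m i)).2) :=
      Fintype.sum_equiv e.symm _ _ (fun a => rfl)
    rw [h1, Finset.sum_coe_sort S (fun p => g p • momentCurve d (T p.1 p.2))]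
    exact hsum
  intro p hp
  have := hli G hGsum (e ⟨p, hp⟩)
  simpa [hG] using this

lemma diff_coeff_zero (hTpos : ∀ i j, 0 < T i j)
    (hTinj : Function.Injective fun p : (i : ι) × Fin (m i) => T p.1 p.2)
    (A : (i : ι) → Finset (Fin (m i))) (b : (i : ι) → Fin (m i)) (hb : ∀ i, b i ∈ A i)
    (hcard : ∑ i, (A i).card ≤ d) (g : ((i : ι) × Fin (m i)) → ℝ)
    (hsum : ∑ i, ∑ j ∈ (A i).erase (b i),
      g ⟨i, j⟩ • (momentCurve d (T i j) - momentCurve d (T i (b i))) = 0) :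
    ∀ i, ∀ j ∈ (A i).erase (b i), g ⟨i, j⟩ = 0 := by
  classical
  set G : ((i : ι) × Fin (m i)) → ℝ := fun p =>
    if p.2 = b p.1 then -(∑ j ∈ (A p.1).erase (b p.1), g ⟨p.1, j⟩) else g p with hGdef
  have hS : (Finset.univ.sigma A).card ≤ d := by
    rw [Finset.card_sigma]; simpa using hcard
  have key : ∑ p ∈ Finset.univ.sigma A, G p • momentCurve d (T p.1 p.2) = 0 := by
    rw [Finset.sum_sigma]
    calc ∑ i, ∑ j ∈ A i, G ⟨i, j⟩ • momentCurve d (T i j)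
        = ∑ i, ∑ j ∈ (A i).erase (b i),
            g ⟨i, j⟩ • (momentCurve d (T i j) - momentCurve d (T i (b i))) := by
          refine Finset.sum_congr rfl fun i _ => ?_
          rw [← Finset.sum_erase_add _ _ (hb i)]
          have h1 : ∀ j ∈ (A i).erase (b i),
              G ⟨i, j⟩ • momentCurve d (T i j) = g ⟨i, j⟩ • momentCurve d (T i j) := by
            intro j hj
            rw [hGdef]
            simp only [if_neg (Finset.ne_of_mem_erase hj)]
          rw [Finset.sum_congr rfl h1]
          have h2 : G ⟨i, b i⟩ = -(∑ j ∈ (A i).erase (b i), g ⟨i, j⟩) := by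
            rw [hGdef]; simp
          rw [h2]
          simp only [smul_sub, Finset.sum_sub_distrib, neg_smul, ← Finset.sum_smul]
          abel
      _ = 0 := hsum
  intro i j hj
  have := coeff_zero_of_sum_zero hTpos hTinj (Finset.univ.sigma A) hS G key ⟨i, j⟩
    (Finset.mem_sigma.mpr ⟨Finset.mem_univ i, Finset.mem_of_mem_erase hj⟩)
  have h2 : G ⟨i, j⟩ = g ⟨i, j⟩ := by
    rw [hGdef]
    exact if_neg (Finset.ne_of_mem_erase hj)
  rw [← h2]
  exact this

end Main
def gmap (d : ℕ) {ι : Type} [Fintype ι] {m : ι → ℕ} (T : (i : ι) → Fin (m i) → ℝ)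
    (σ : (i : ι) → Fin (m i)) : E d := ∑ i, momentCurve d (T i (σ i))

def Phi (d : ℕ) {ι : Type} [Fintype ι] [DecidableEq ι] {m : ι → ℕ}
    (T : (i : ι) → Fin (m i) → ℝ) (A : (i : ι) → Finset (Fin (m i))) : Set (E d) :=
  convexHull ℝ (gmap d T '' ↑(Fintype.piFinset A))

section Dim

variable {d : ℕ} {ι : Type} [Fintype ι] [DecidableEq ι] {m : ι → ℕ}
  {T : (i : ι) → Fin (m i) → ℝ}

lemma sum_card_eq_dim_add_card (hTpos : ∀ i j, 0 < T i j)
    (hTinj : Function.Injective fun p : (i : ι) × Fin (m i) => T p.1 p.2)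
    (A : (i : ι) → Finset (Fin (m i))) (hA : ∀ i, (A i).Nonempty)
    (hcard : ∑ i, (A i).card ≤ d) :
    ∑ i, (A i).card = dimSet (Phi d T A) + Fintype.card ι := by
  classical
  set b : (i : ι) → Fin (m i) := fun i => (hA i).choose with hbdef
  have hb : ∀ i, b i ∈ A i := fun i => (hA i).choose_spec
  set S : Set (E d) := gmap d T '' ↑(Fintype.piFinset A) with hSdef
  have hdim : dimSet (Phi d T A) = Module.finrank ℝ (vectorSpan ℝ S) := by
    rw [Phi, dimSet, affineSpan_convexHull, direction_affineSpan]
  set u' : ((i : ι) × {j // j ∈ (A i).erase (b i)}) → E d :=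
    fun p => momentCurve d (T p.1 p.2) - momentCurve d (T p.1 (b p.1)) with hu'
  have hbmem : b ∈ Fintype.piFinset A := Fintype.mem_piFinset.mpr hb
  have hupdate : ∀ (i : ι) (j : Fin (m i)), j ∈ A i →
      Function.update b i j ∈ Fintype.piFinset A := by
    intro i j hj
    refine Fintype.mem_piFinset.mpr fun i' => ?_
    rcases eq_or_ne i' i with rfl | hne
    · simpa using hj
    · simpa [Function.update_of_ne hne] using hb i'
  have hgmap_update : ∀ (i : ι) (j : Fin (m i)),
      gmap d T (Function.update b i j) - gmap d T b
        = momentCurve d (T i j) - momentCurve d (T i (b i)) := by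
    intro i j
    rw [gmap, gmap, sum_update_pi (fun i j => momentCurve d (T i j)) b i j,
      Finset.sum_eq_add_sum_sdiff_singleton_of_mem (Finset.mem_univ i)
        (fun i' => momentCurve d (T i' (b i')))]
    abel
  have claim1 : vectorSpan ℝ S = Submodule.span ℝ (Set.range u') := by
    apply le_antisymm
    · rw [vectorSpan_def]
      apply Submodule.span_le.mpr
      intro v hv
      rw [Set.mem_vsub] at hv
      obtain ⟨x, hx, y, hy, rfl⟩ := hv
      obtain ⟨σ, hσ, rfl⟩ := hx
      obtain ⟨τ, hτ, rfl⟩ := hy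
      rw [Finset.mem_coe, Fintype.mem_piFinset] at hσ hτ
      have hgen : ∀ (i : ι) (j : Fin (m i)), j ∈ A i →
          momentCurve d (T i j) - momentCurve d (T i (b i)) ∈ Submodule.span ℝ (Set.range u') := by
        intro i j hj
        rcases eq_or_ne j (b i) with rfl | hne
        · rw [sub_self]; exact Submodule.zero_mem _
        · exact Submodule.subset_span ⟨⟨i, ⟨j, Finset.mem_erase.mpr ⟨hne, hj⟩⟩⟩, rfl⟩
      have heq : gmap d T σ -ᵥ gmap d T τ
          = ∑ i, ((momentCurve d (T i (σ i)) - momentCurve d (T i (b i)))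
              - (momentCurve d (T i (τ i)) - momentCurve d (T i (b i)))) := by
        rw [vsub_eq_sub, gmap, gmap, ← Finset.sum_sub_distrib]
        congr 1
        funext i
        abel
      rw [SetLike.mem_coe, heq]
      exact Submodule.sum_mem _ fun i _ =>
        Submodule.sub_mem _ (hgen i (σ i) (hσ i)) (hgen i (τ i) (hτ i))
    · apply Submodule.span_le.mpr
      rintro v ⟨⟨i, j⟩, rfl⟩
      have : u' ⟨i, j⟩ = gmap d T (Function.update b i ↑j) -ᵥ gmap d T b := by
        rw [vsub_eq_sub, hgmap_update]
      rw [SetLike.mem_coe, this]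
      exact vsub_mem_vectorSpan ℝ
        (Set.mem_image_of_mem _ (by exact_mod_cast hupdate i ↑j (Finset.mem_of_mem_erase j.2)))
        (Set.mem_image_of_mem _ (by exact_mod_cast hbmem))
  have claim2 : LinearIndependent ℝ u' := by
    rw [Fintype.linearIndependent_iff]
    intro g hg
    set gh : ((i : ι) × Fin (m i)) → ℝ := fun p =>
      if h : p.2 ∈ (A p.1).erase (b p.1) then g ⟨p.1, ⟨p.2, h⟩⟩ else 0 with hghdef
    have hconv : ∑ i, ∑ j ∈ (A i).erase (b i),
        gh ⟨i, j⟩ • (momentCurve d (T i j) - momentCurve d (T i (b i))) = 0 := by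
      rw [← hg]
      rw [← Finset.univ_sigma_univ, Finset.sum_sigma]
      refine Finset.sum_congr rfl fun i _ => ?_
      rw [Finset.univ_eq_attach, ← Finset.sum_attach ((A i).erase (b i))
        (fun j => gh ⟨i, j⟩ • (momentCurve d (T i j) - momentCurve d (T i (b i))))]
      refine Finset.sum_congr rfl fun j _ => ?_
      have : gh ⟨i, ↑j⟩ = g ⟨i, j⟩ := by
        rw [hghdef]
        simp only [dif_pos j.2]
      rw [this]
    have hz := diff_coeff_zero hTpos hTinj A b hb hcard gh hconv
    rintro ⟨i, j⟩
    have := hz i ↑j j.2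
    rw [hghdef] at this
    simpa [dif_pos j.2] using this
  have hfr : Module.finrank ℝ (vectorSpan ℝ S) = ∑ i, ((A i).card - 1) := by
    rw [claim1, finrank_span_eq_card claim2]
    rw [Fintype.card_sigma]
    refine Finset.sum_congr rfl fun i _ => ?_
    rw [Fintype.card_coe, Finset.card_erase_of_mem (hb i)]
  rw [hdim, hfr]
  have : ∀ i ∈ Finset.univ, (A i : Finset (Fin (m i))).card = ((A i).card - 1) + 1 := by
    intro i _
    have := (hA i).card_pos
    omega
  rw [Finset.sum_congr rfl this, Finset.sum_add_distrib]
  simp [Finset.card_univ]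

end Dim
lemma dimSet_mono {d : ℕ} {F G : Set (E d)} (h : F ⊆ G) : dimSet F ≤ dimSet G :=
  Submodule.finrank_mono (AffineSubspace.direction_le (affineSpan_mono ℝ h))

lemma shrink_tuple {ι : Type} [Fintype ι] [DecidableEq ι] {m : ι → ℕ}
    (M : ℕ) (hM : Fintype.card ι ≤ M) :
    ∀ (t : ℕ) (A : (i : ι) → Finset (Fin (m i))), ∑ i, (A i).card = t →
      (∀ i, (A i).Nonempty) → M ≤ t →
      ∃ B : (i : ι) → Finset (Fin (m i)), (∀ i, (B i).Nonempty) ∧ (∀ i, B i ⊆ A i)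
        ∧ ∑ i, (B i).card = M := by
  intro t
  induction t using Nat.strong_induction_on with
  | _ t ih =>
    intro A hAt hA hMt
    rcases eq_or_lt_of_le hMt with heq | hlt
    · exact ⟨A, hA, fun i => subset_rfl, by omega⟩
    · have hex : ∃ i, 2 ≤ (A i).card := by
        by_contra h
        push_neg at h
        have h1 : ∀ i, (A i).card = 1 := fun i => le_antisymm (by have := h i; omega) (hA i).card_pos
        have h2 : ∑ i, (A i).card = Fintype.card ι := by
          rw [Finset.sum_congr rfl fun i _ => h1 i]
          simp
        omega
      obtain ⟨i0, hi0⟩ := hex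
      obtain ⟨a, ha⟩ := hA i0
      set A' : (i : ι) → Finset (Fin (m i)) := Function.update A i0 ((A i0).erase a) with hA'def
      have hApp : ∀ i, A' i ⊆ A i := by
        intro i
        rcases eq_or_ne i i0 with rfl | hne
        · rw [hA'def]; simp only [Function.update_self]; exact Finset.erase_subset _ _
        · rw [hA'def, Function.update_of_ne hne]
      have hA'ne : ∀ i, (A' i).Nonempty := by
        intro i
        rcases eq_or_ne i i0 with rfl | hne
        · rw [hA'def]
          simp only [Function.update_self]
          rw [← Finset.card_pos, Finset.card_erase_of_mem ha]
          omega
        · rw [hA'def, Function.update_of_ne hne]; exact hA i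
      have hsum' : ∑ i, (A' i).card = t - 1 := by
        rw [hA'def]
        have : (fun i => (Function.update A i0 ((A i0).erase a) i).card)
            = Function.update (fun i => (A i).card) i0 ((A i0).erase a).card := by
          funext i
          rcases eq_or_ne i i0 with rfl | hne
          · simp
          · simp [Function.update_of_ne hne]
        rw [this, Finset.sum_update_of_mem (Finset.mem_univ i0), Finset.card_erase_of_mem ha]
        rw [Finset.sum_eq_add_sum_sdiff_singleton_of_mem (Finset.mem_univ i0) (fun i => (A i).card)] at hAt
        omega
      obtain ⟨B, hB1, hB2, hB3⟩ := ih (t - 1) (by omega) A' hsum' hA'ne (by omega)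
      exact ⟨B, hB1, fun i => (hB2 i).trans (hApp i), hB3⟩

lemma sum_range_pi {ι : Type} [Fintype ι] [DecidableEq ι] {κ : ι → Type} [∀ i, Nonempty (κ i)]
    {M : Type*} [AddCommMonoid M] (f : (i : ι) → κ i → M) :
    ∑ i, Set.range (f i) = Set.range (fun σ : (i : ι) → κ i => ∑ i, f i (σ i)) := by
  classical
  suffices h : ∀ s : Finset ι, ∑ i ∈ s, Set.range (f i)
      = Set.range (fun σ : (i : ι) → κ i => ∑ i ∈ s, f i (σ i)) from h Finset.univ
  intro s
  induction s using Finset.induction_on with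
  | empty =>
    ext x
    simp only [Finset.sum_empty, Set.mem_zero, Set.mem_range]
    constructor
    · rintro rfl
      exact ⟨Classical.arbitrary _, by simp⟩
    · rintro ⟨σ, rfl⟩
      simp
  | @insert a s ha ih =>
    rw [Finset.sum_insert ha, ih]
    ext x
    rw [Set.mem_add]
    simp only [Set.mem_range, Finset.sum_insert ha]
    constructor
    · rintro ⟨b, ⟨ja, rfl⟩, y, ⟨σ, rfl⟩, rfl⟩
      refine ⟨Function.update σ a ja, ?_⟩
      rw [Function.update_self]
      congr 1
      refine Finset.sum_congr rfl fun i hi => ?_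
      have hne : i ≠ a := fun h => ha (h ▸ hi)
      rw [Function.update_of_ne hne]
    · rintro ⟨σ, rfl⟩
      exact ⟨f a (σ a), ⟨σ a, rfl⟩, ∑ i ∈ s, f i (σ i), ⟨σ, rfl⟩, rfl⟩
open Classical in
def AmaxT (d : ℕ) {ι : Type} [Fintype ι] {m : ι → ℕ} (T : (i : ι) → Fin (m i) → ℝ)
    (c : E d) : (i : ι) → Finset (Fin (m i)) :=
  fun i => Finset.univ.filter fun j =>
    ∀ j', ⟪momentCurve d (T i j'), c⟫ ≤ ⟪momentCurve d (T i j), c⟫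

lemma mem_AmaxT {d : ℕ} {ι : Type} [Fintype ι] {m : ι → ℕ} {T : (i : ι) → Fin (m i) → ℝ}
    {c : E d} {i : ι} {j : Fin (m i)} :
    j ∈ AmaxT d T c i ↔ ∀ j', ⟪momentCurve d (T i j'), c⟫ ≤ ⟪momentCurve d (T i j), c⟫ := by
  simp [AmaxT]

section Struct

variable {d : ℕ} {ι : Type} [Fintype ι] [DecidableEq ι] {m : ι → ℕ}
  {T : (i : ι) → Fin (m i) → ℝ}

lemma inner_gmap (σ : (i : ι) → Fin (m i)) (c : E d) :
    ⟪gmap d T σ, c⟫ = ∑ i, ⟪momentCurve d (T i (σ i)), c⟫ := by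
  rw [gmap, sum_inner]

lemma AmaxT_nonempty (hm : ∀ i, 1 ≤ m i) (c : E d) (i : ι) : (AmaxT d T c i).Nonempty := by
  haveI : Nonempty (Fin (m i)) := ⟨⟨0, hm i⟩⟩
  obtain ⟨j, _, hj⟩ := Finset.exists_max_image Finset.univ
    (fun j => ⟪momentCurve d (T i j), c⟫) Finset.univ_nonempty
  exact ⟨j, mem_AmaxT.mpr fun j' => hj j' (Finset.mem_univ j')⟩

lemma maximizers_P (hm : ∀ i, 1 ≤ m i) (c : E d) :
    maximizers (Phi d T fun _ => Finset.univ) c = Phi d T (AmaxT d T c) := by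
  haveI : ∀ i, Nonempty (Fin (m i)) := fun i => ⟨⟨0, hm i⟩⟩
  classical
  set W : Finset (E d) :=
    (Fintype.piFinset fun i : ι => (Finset.univ : Finset (Fin (m i)))).image (gmap d T) with hW
  have hWmem : ∀ σ : (i : ι) → Fin (m i), gmap d T σ ∈ W := by
    intro σ
    exact Finset.mem_image.mpr ⟨σ, Fintype.mem_piFinset.mpr fun i => Finset.mem_univ _, rfl⟩
  have hPW : Phi d T (fun _ => Finset.univ) = convexHull ℝ (W : Set (E d)) := by
    rw [Phi, hW, Finset.coe_image]
  have hWne : W.Nonempty :=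
    ⟨gmap d T (Classical.arbitrary _), hWmem _⟩
  have hset : W.filter (fun v => ∀ u ∈ W, ⟪u, c⟫ ≤ ⟪v, c⟫)
      = (Fintype.piFinset (AmaxT d T c)).image (gmap d T) := by
    ext w
    rw [Finset.mem_filter]
    constructor
    · rintro ⟨hwW, hmax⟩
      obtain ⟨σ, _, rfl⟩ := Finset.mem_image.mp hwW
      refine Finset.mem_image.mpr ⟨σ, Fintype.mem_piFinset.mpr fun i => mem_AmaxT.mpr ?_, rfl⟩
      refine (argmax_sum_pi (fun i j => ⟪momentCurve d (T i j), c⟫) σ).mp ?_ i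
      intro τ
      have := hmax (gmap d T τ) (hWmem τ)
      rwa [inner_gmap, inner_gmap] at this
    · intro hw
      obtain ⟨σ, hσ, rfl⟩ := Finset.mem_image.mp hw
      rw [Fintype.mem_piFinset] at hσ
      refine ⟨hWmem σ, fun u hu => ?_⟩
      obtain ⟨τ, _, rfl⟩ := Finset.mem_image.mp hu
      rw [inner_gmap, inner_gmap]
      exact Finset.sum_le_sum fun i _ => mem_AmaxT.mp (hσ i) (τ i)
  rw [hPW, maximizers_convexHull W hWne c, hset, Phi, Finset.coe_image]

lemma exists_c_tuple [Nonempty ι]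
    (hTpos : ∀ i j, 0 < T i j)
    (hTinj : Function.Injective fun p : (i : ι) × Fin (m i) => T p.1 p.2)
    (A : (i : ι) → Finset (Fin (m i))) (hA : ∀ i, (A i).Nonempty)
    (hcard : 2 * ∑ i, (A i).card ≤ d) :
    ∃ c : E d, c ≠ 0 ∧ AmaxT d T c = A := by
  classical
  set R : Finset ℝ := (Finset.univ.sigma A).image
    (fun p : (i : ι) × Fin (m i) => T p.1 p.2) with hR
  have hRcard : R.card = ∑ i, (A i).card := by
    rw [hR, Finset.card_image_of_injective _ hTinj, Finset.card_sigma]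
  have hRne : R.Nonempty := by
    obtain ⟨i0⟩ := ‹Nonempty ι›
    obtain ⟨j0, hj0⟩ := hA i0
    exact ⟨T i0 j0, Finset.mem_image.mpr
      ⟨⟨i0, j0⟩, Finset.mem_sigma.mpr ⟨Finset.mem_univ _, hj0⟩, rfl⟩⟩
  obtain ⟨c, hc0, e0, hc⟩ := exists_c_for_roots (d := d) R hRne (by rw [hRcard]; exact hcard)
  refine ⟨c, hc0, ?_⟩
  have hmemR : ∀ (i : ι) (j : Fin (m i)), T i j ∈ R ↔ j ∈ A i := by
    intro i j
    rw [hR, Finset.mem_image]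
    constructor
    · rintro ⟨p, hp, he⟩
      have heq : (⟨p.1, p.2⟩ : (i : ι) × Fin (m i)) = ⟨i, j⟩ := hTinj he
      rw [Finset.mem_sigma] at hp
      obtain ⟨h1, h2⟩ := Sigma.mk.inj_iff.mp heq
      subst h1
      rw [← eq_of_heq h2]
      exact hp.2
    · intro hj
      exact ⟨⟨i, j⟩, Finset.mem_sigma.mpr ⟨Finset.mem_univ _, hj⟩, rfl⟩
  funext i
  ext j
  rw [mem_AmaxT]
  constructor
  · intro hmax
    obtain ⟨j0, hj0⟩ := hA i
    have h1 : ⟪momentCurve d (T i j0), c⟫ = e0 := (hc (T i j0)).2.mpr ((hmemR i j0).mpr hj0)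
    have h2 := hmax j0
    have h3 := (hc (T i j)).1
    have h4 : ⟪momentCurve d (T i j), c⟫ = e0 := le_antisymm h3 (h1 ▸ h2)
    exact (hmemR i j).mp ((hc (T i j)).2.mp h4)
  · intro hj j'
    rw [(hc (T i j)).2.mpr ((hmemR i j).mpr hj)]
    exact (hc (T i j')).1

end Struct
section Count

variable {d : ℕ} {ι : Type} [Fintype ι] [DecidableEq ι] [Nonempty ι] {m : ι → ℕ}
  {T : (i : ι) → Fin (m i) → ℝ}

lemma faces_eq (hm : ∀ i, 1 ≤ m i)
    (hTpos : ∀ i j, 0 < T i j)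
    (hTinj : Function.Injective fun p : (i : ι) × Fin (m i) => T p.1 p.2)
    (k : ℕ) (hk : k + Fintype.card ι ≤ d / 2) :
    {F : Set (E d) | IsFace (Phi d T fun _ => Finset.univ) F ∧ F.Nonempty ∧ dimSet F = k}
      = Phi d T ''
        {A | (∀ i, (A i).Nonempty) ∧ ∑ i, (A i).card = k + Fintype.card ι} := by
  classical
  haveI : ∀ i, Nonempty (Fin (m i)) := fun i => ⟨⟨0, hm i⟩⟩
  have hcpos : 1 ≤ Fintype.card ι := Fintype.card_pos
  have hd2 : 2 * (d / 2) ≤ d := Nat.mul_div_le d 2 |>.trans_eq (by ring_nf) |>.trans le_rfl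
  ext F
  simp only [Set.mem_setOf_eq, Set.mem_image]
  constructor
  · rintro ⟨hface, hne, hdim⟩
    have hc : ∃ c : E d, F = maximizers (Phi d T fun _ => Finset.univ) c := by
      rcases hface with h | h | ⟨c, _, h⟩
      · exact absurd h (Set.nonempty_iff_ne_empty.mp hne)
      · refine ⟨0, ?_⟩
        rw [h]
        ext x
        simp [maximizers]
      · exact ⟨c, h⟩
    obtain ⟨c, hFc⟩ := hc
    set A := AmaxT d T c with hAdef
    have hFA : F = Phi d T A := by rw [hFc, maximizers_P hm c]
    have hAne : ∀ i, (A i).Nonempty := fun i => AmaxT_nonempty hm c i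
    set N := ∑ i, (A i).card with hNdef
    have hdimA : dimSet (Phi d T A) = k := by rw [← hFA]; exact hdim
    have hN : N = k + Fintype.card ι := by
      by_cases hNd : N ≤ d
      · have h1 := sum_card_eq_dim_add_card hTpos hTinj A hAne hNd
        rw [hdimA] at h1
        exact h1
      · exfalso
        have hm1 : Fintype.card ι ≤ k + Fintype.card ι + 1 := by omega
        have hm2 : k + Fintype.card ι + 1 ≤ N := by omega
        obtain ⟨B, hBne, hBsub, hBsum⟩ := shrink_tuple (k + Fintype.card ι + 1)
          hm1 N A rfl hAne hm2
        have hBd : ∑ i, (B i).card ≤ d := by omega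
        have hdB := sum_card_eq_dim_add_card hTpos hTinj B hBne hBd
        have hmono : dimSet (Phi d T B) ≤ dimSet (Phi d T A) := by
          apply dimSet_mono
          apply convexHull_mono
          apply Set.image_mono
          intro σ hσ
          rw [Finset.mem_coe, Fintype.mem_piFinset] at hσ ⊢
          exact fun i => hBsub i (hσ i)
        rw [hdimA] at hmono
        omega
    exact ⟨A, ⟨hAne, hN⟩, hFA.symm⟩
  · rintro ⟨A, ⟨hAne, hAsum⟩, rfl⟩
    have hA2d : 2 * ∑ i, (A i).card ≤ d := by omega
    obtain ⟨c, hc0, hAmax⟩ := exists_c_tuple hTpos hTinj A hAne hA2d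
    refine ⟨?_, ?_, ?_⟩
    · right; right
      exact ⟨c, hc0, by rw [maximizers_P hm c, hAmax]⟩
    · refine ⟨gmap d T (fun i => (hAne i).choose), subset_convexHull _ _ ?_⟩
      exact Set.mem_image_of_mem _
        (by exact_mod_cast Fintype.mem_piFinset.mpr fun i => (hAne i).choose_spec)
    · have hAd : ∑ i, (A i).card ≤ d := by omega
      have h1 := sum_card_eq_dim_add_card hTpos hTinj A hAne hAd
      omega

lemma fVec_eq (hm : ∀ i, 1 ≤ m i)
    (hTpos : ∀ i j, 0 < T i j)
    (hTinj : Function.Injective fun p : (i : ι) × Fin (m i) => T p.1 p.2)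
    (k : ℕ) (hk : k + Fintype.card ι ≤ d / 2) :
    fVec (Phi d T fun _ => Finset.univ) k
      = ∑ s ∈ (Fintype.piFinset fun i => Finset.Icc 1 (m i)).filter
          (fun s => ∑ i, s i = k + Fintype.card ι), ∏ i, (m i).choose (s i) := by
  classical
  haveI : ∀ i, Nonempty (Fin (m i)) := fun i => ⟨⟨0, hm i⟩⟩
  have hcpos : 1 ≤ Fintype.card ι := Fintype.card_pos
  rw [fVec, faces_eq hm hTpos hTinj k hk]
  have hinj : Set.InjOn (Phi d T)
      {A | (∀ i, (A i).Nonempty) ∧ ∑ i, (A i).card = k + Fintype.card ι} := by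
    have key : ∀ (X Y : (i : ι) → Finset (Fin (m i))), (∀ i, (X i).Nonempty) →
        ∑ i, (X i).card = k + Fintype.card ι → (∀ i, (Y i).Nonempty) →
        Phi d T X = Phi d T Y → ∀ i, Y i ⊆ X i := by
      intro X Y hXne hXsum hYne hPhi i j hj
      have hX2d : 2 * ∑ i', (X i').card ≤ d := by omega
      obtain ⟨c, hc0, hXmax⟩ := exists_c_tuple hTpos hTinj X hXne hX2d
      set σ : (i' : ι) → Fin (m i') := Function.update (fun i' => (hYne i').choose) i j
        with hσdef
      have hσY : σ ∈ Fintype.piFinset Y := by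
        refine Fintype.mem_piFinset.mpr fun i' => ?_
        rcases eq_or_ne i' i with rfl | hne
        · simpa [hσdef] using hj
        · simp only [hσdef, Function.update_of_ne hne]
          exact (hYne i').choose_spec
      have hx : gmap d T σ ∈ Phi d T X := by
        rw [hPhi]
        exact subset_convexHull _ _ (Set.mem_image_of_mem _ (by exact_mod_cast hσY))
      have hmaxx : gmap d T σ ∈ maximizers (Phi d T fun _ => Finset.univ) c := by
        rw [maximizers_P hm c, hXmax]
        exact hx
      obtain ⟨-, hmax⟩ := hmaxx
      have h1 : ∀ τ : (i' : ι) → Fin (m i'),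
          ∑ i', ⟪momentCurve d (T i' (τ i')), c⟫ ≤ ∑ i', ⟪momentCurve d (T i' (σ i')), c⟫ := by
        intro τ
        have hτP : gmap d T τ ∈ Phi d T (fun _ => Finset.univ) :=
          subset_convexHull _ _ (Set.mem_image_of_mem _
            (by exact_mod_cast Fintype.mem_piFinset.mpr fun i' => Finset.mem_univ _))
        have := hmax (gmap d T τ) hτP
        rwa [inner_gmap, inner_gmap] at this
      have hσX : σ i ∈ X i := by
        have h2 := (argmax_sum_pi (fun i' j' => ⟪momentCurve d (T i' j'), c⟫) σ).mp h1 i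
        have h3 : σ i ∈ AmaxT d T c i := mem_AmaxT.mpr h2
        rwa [hXmax] at h3
      rwa [hσdef, Function.update_self] at hσX
    rintro A ⟨hAne, hAsum⟩ B ⟨hBne, hBsum⟩ hAB
    funext i
    exact Finset.Subset.antisymm (key B A hBne hBsum hAne hAB.symm i) (key A B hAne hAsum hBne hAB i)
  rw [Set.ncard_image_of_injOn hinj]
  have hsetfin : {A : (i : ι) → Finset (Fin (m i)) |
        (∀ i, (A i).Nonempty) ∧ ∑ i, (A i).card = k + Fintype.card ι}
      = ↑(Finset.univ.filter fun A : (i : ι) → Finset (Fin (m i)) =>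
          (∀ i, (A i).Nonempty) ∧ ∑ i, (A i).card = k + Fintype.card ι) := by
    ext A
    simp
  rw [hsetfin, Set.ncard_coe_finset]
  rw [Finset.card_eq_sum_card_fiberwise (f := fun A i => (A i).card)
    (t := (Fintype.piFinset fun i => Finset.Icc 1 (m i)).filter
      (fun s => ∑ i, s i = k + Fintype.card ι)) ?_]
  · refine Finset.sum_congr rfl fun s hs => ?_
    rw [Finset.mem_filter, Fintype.mem_piFinset] at hs
    have hfib : (Finset.univ.filter fun A : (i : ι) → Finset (Fin (m i)) =>
          (∀ i, (A i).Nonempty) ∧ ∑ i, (A i).card = k + Fintype.card ι).filter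
          (fun A => (fun i => (A i).card) = s)
        = Fintype.piFinset fun i => Finset.univ.powersetCard (s i) := by
      ext A
      simp only [Finset.mem_filter, Finset.mem_univ, true_and, Fintype.mem_piFinset,
        Finset.mem_powersetCard]
      constructor
      · rintro ⟨⟨hne, hsum⟩, hprof⟩
        intro i
        exact ⟨Finset.subset_univ _, congrFun hprof i⟩
      · intro h
        have hcardeq : ∀ i, (A i).card = s i := fun i => (h i).2
        refine ⟨⟨fun i => Finset.card_pos.mp ?_, ?_⟩, funext hcardeq⟩
        · rw [hcardeq i]
          have := (Finset.mem_Icc.mp (hs.1 i)).1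
          omega
        · rw [Finset.sum_congr rfl fun i _ => hcardeq i]
          exact hs.2
    rw [hfib, Fintype.card_piFinset]
    refine Finset.prod_congr rfl fun i _ => ?_
    rw [Finset.card_powersetCard]
    simp
  · intro A hA
    rw [Finset.mem_coe, Finset.mem_filter] at hA
    obtain ⟨-, hAne, hAsum⟩ := hA
    rw [Finset.mem_coe, Finset.mem_filter, Fintype.mem_piFinset]
    refine ⟨fun i => Finset.mem_Icc.mpr ⟨(hAne i).card_pos, ?_⟩, hAsum⟩
    have := Finset.card_le_univ (A i)
    simpa using this

end Count

theorem trivial_upper_bound_attained_cyclic (d n : ℕ) (hd : 4 ≤ d)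
    (hn1 : 1 ≤ n) (hn2 : n ≤ d / 2) (m : Fin n → ℕ) (hm : ∀ i, 1 ≤ m i) :
    ∃ T : (i : Fin n) → Fin (m i) → ℝ,
      (Function.Injective fun p : Σ i : Fin n, Fin (m i) => T p.1 p.2) ∧
      (∀ i, fVec (convexHull ℝ (Set.range fun j => momentCurve d (T i j))) 0 = m i) ∧
      ∀ k : ℕ, k ≤ d / 2 - n →
        fVec (∑ i, convexHull ℝ (Set.range fun j => momentCurve d (T i j))) k =
          ∑ s ∈ (Fintype.piFinset fun i => Finset.Icc 1 (m i)).filter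
              (fun s => ∑ i, s i = k + n),
            ∏ i, Nat.choose (m i) (s i) := by
  classical
  haveI : Nonempty (Fin n) := ⟨⟨0, hn1⟩⟩
  haveI : ∀ i : Fin n, Nonempty (Fin (m i)) := fun i => ⟨⟨0, hm i⟩⟩
  set e := Fintype.equivFin ((i : Fin n) × Fin (m i)) with he
  set T : (i : Fin n) → Fin (m i) → ℝ := fun i j => ((e ⟨i, j⟩ : ℕ) : ℝ) + 1 with hT
  have hTpos : ∀ i j, 0 < T i j := fun i j => by
    rw [hT]
    positivity
  have hTinj : Function.Injective fun p : (i : Fin n) × Fin (m i) => T p.1 p.2 := by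
    intro p q hpq
    simp only [hT] at hpq
    have h1 : ((e ⟨p.1, p.2⟩ : ℕ) : ℝ) = ((e ⟨q.1, q.2⟩ : ℕ) : ℝ) := by linarith
    have h2 : (e ⟨p.1, p.2⟩ : ℕ) = (e ⟨q.1, q.2⟩ : ℕ) := Nat.cast_injective h1
    have h3 : (⟨p.1, p.2⟩ : (i : Fin n) × Fin (m i)) = ⟨q.1, q.2⟩ :=
      e.injective (Fin.val_injective h2)
    rwa [Sigma.eta, Sigma.eta] at h3
  refine ⟨T, hTinj, ?_, ?_⟩
  · -- f_0(P_i) = m_i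
    intro i
    set T' : (x : Fin 1) → Fin ((fun _ : Fin 1 => m i) x) → ℝ := fun _ j => T i j with hT'
    have hT'pos : ∀ x j, 0 < T' x j := fun x j => hTpos i j
    have hT'inj : Function.Injective
        fun p : (x : Fin 1) × Fin ((fun _ : Fin 1 => m i) x) => T' p.1 p.2 := by
      intro p q hpq
      have h1 : (⟨i, p.2⟩ : (i' : Fin n) × Fin (m i')) = ⟨i, q.2⟩ := hTinj hpq
      obtain ⟨-, h2⟩ := Sigma.mk.inj_iff.mp h1
      obtain ⟨x1, j1⟩ := p
      obtain ⟨x2, j2⟩ := q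
      have : x1 = x2 := Subsingleton.elim _ _
      subst this
      have hj : j1 = j2 := eq_of_heq h2
      subst hj
      rfl
    have hhull : convexHull ℝ (Set.range fun j => momentCurve d (T i j))
        = Phi d T' (fun _ => Finset.univ) := by
      rw [Phi, Fintype.piFinset_univ, Finset.coe_univ, Set.image_univ]
      congr 1
      ext x
      simp only [Set.mem_range]
      constructor
      · rintro ⟨j, rfl⟩
        exact ⟨fun _ => j, by rw [gmap, Fin.sum_univ_one]⟩
      · rintro ⟨σ, rfl⟩
        exact ⟨σ 0, by rw [gmap, Fin.sum_univ_one]⟩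
    have hk1 : (0:ℕ) + Fintype.card (Fin 1) ≤ d / 2 := by
      simp only [Fintype.card_fin]
      omega
    rw [hhull, fVec_eq (fun _ => hm i) hT'pos hT'inj 0 hk1]
    have hfilter : (Fintype.piFinset fun _ : Fin 1 => Finset.Icc 1 (m i)).filter
        (fun s => ∑ x, s x = 0 + Fintype.card (Fin 1)) = {fun _ : Fin 1 => 1} := by
      ext s
      simp only [Finset.mem_filter, Fintype.mem_piFinset, Finset.mem_Icc, Fin.sum_univ_one,
        Finset.mem_singleton, Fintype.card_fin]
      constructor
      · rintro ⟨hIcc, hsum⟩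
        funext x
        have : x = 0 := Subsingleton.elim _ _
        rw [this]
        omega
      · rintro rfl
        refine ⟨fun x => ⟨le_refl 1, hm i⟩, by simp⟩
    rw [hfilter, Finset.sum_singleton, Fin.prod_univ_one, Nat.choose_one_right]
  · -- main count
    intro k hk
    have hk' : k + Fintype.card (Fin n) ≤ d / 2 := by
      rw [Fintype.card_fin]
      omega
    have hhull : (∑ i, convexHull ℝ (Set.range fun j => momentCurve d (T i j)))
        = Phi d T (fun _ => Finset.univ) := by
      rw [← convexHull_sum, sum_range_pi (fun i j => momentCurve d (T i j)), Phi,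
        Fintype.piFinset_univ, Finset.coe_univ, Set.image_univ]
      rfl
    rw [hhull, fVec_eq hm hTpos hTinj k hk', Fintype.card_fin]
end
end
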